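/- arXiv:0811.4318 — 8 statements merged into one kernel-verified Lean document; each statement's English description precedes it below -/
import Mathlib

section
/- For every μ > 0, the function κ ↦ S_f(μ, κ) = κ - log(κ/μ) + log Γ(κ) - (κ - 1)ψ(κ) is differentiable on (0, ∞) and its derivative at every κ > 0 equals -((κ - 1)(κ ψ'(κ) - 1))/κ, where ψ' is the derivative of the digamma function. -/
/-- The digamma function `ψ = Γ'/Γ`. -/
noncomputable def digamma (x : ℝ) : ℝ := deriv Real.Gamma x / Real.Gamma x

/-- The trigamma function `ψ'`, the derivative of the digamma function. -/
noncomputable def trigamma (x : ℝ) : ℝ := deriv digamma x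

/-- Shannon entropy of the gamma density with mean `μ` and shape `κ`. -/
noncomputable def gammaEntropy (μ κ : ℝ) : ℝ :=
  κ - Real.log (κ / μ) + Real.log (Real.Gamma κ) - (κ - 1) * digamma κ

lemma analyticOnNhd_cGamma :
    AnalyticOnNhd ℂ Complex.Gamma {s : ℂ | 0 < s.re} := by
  have hopen : IsOpen {s : ℂ | 0 < s.re} := isOpen_lt continuous_const Complex.continuous_re
  intro z hz
  refine DifferentiableOn.analyticAt (fun w hw => ?_) (hopen.mem_nhds hz)
  refine (Complex.differentiableAt_Gamma w (fun m => ?_)).differentiableWithinAt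
  intro h
  rw [h] at hw
  simp only [Set.mem_setOf_eq, Complex.neg_re, Complex.natCast_re] at hw
  have : (0:ℝ) ≤ m := Nat.cast_nonneg m
  linarith

lemma mem_pos_re {x : ℝ} (hx : 0 < x) : ((x:ℂ)) ∈ {s : ℂ | 0 < s.re} := by
  simpa using hx

lemma hasDerivAt_rGamma {x : ℝ} (hx : 0 < x) :
    HasDerivAt Real.Gamma ((deriv Complex.Gamma x).re) x := by
  exact ((analyticOnNhd_cGamma _ (mem_pos_re hx)).differentiableAt.hasDerivAt).real_of_complex

lemma deriv_rGamma_eq {x : ℝ} (hx : 0 < x) :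
    deriv Real.Gamma x = (deriv Complex.Gamma x).re :=
  (hasDerivAt_rGamma hx).deriv

lemma hasDerivAt_deriv_rGamma {x : ℝ} (hx : 0 < x) :
    HasDerivAt (deriv Real.Gamma) ((deriv (deriv Complex.Gamma) x).re) x := by
  have h1 : HasDerivAt (fun y : ℝ => (deriv Complex.Gamma y).re)
      ((deriv (deriv Complex.Gamma) x).re) x :=
    ((analyticOnNhd_cGamma.deriv _ (mem_pos_re hx)).differentiableAt.hasDerivAt).real_of_complex
  refine h1.congr_of_eventuallyEq ?_
  filter_upwards [eventually_gt_nhds hx] with y hy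
  exact deriv_rGamma_eq hy

lemma hasDerivAt_digamma {x : ℝ} (hx : 0 < x) :
    HasDerivAt digamma (trigamma x) x := by
  have hΓne : Real.Gamma x ≠ 0 := (Real.Gamma_pos_of_pos hx).ne'
  have hd : DifferentiableAt ℝ digamma x := by
    unfold digamma
    exact ((hasDerivAt_deriv_rGamma hx).differentiableAt).div
      (Real.differentiableAt_Gamma (fun m => by
        intro h
        rw [h] at hx
        have : (0:ℝ) ≤ (m:ℝ) := Nat.cast_nonneg m
        linarith)) hΓne
  exact hd.hasDerivAt

lemma gammaEntropy_hasDerivAt (μ : ℝ) (hμ : 0 < μ) {κ : ℝ} (hκ : 0 < κ) :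
    HasDerivAt (fun κ => gammaEntropy μ κ)
      (-((κ - 1) * (κ * trigamma κ - 1)) / κ) κ := by
  have hΓne : Real.Gamma κ ≠ 0 := (Real.Gamma_pos_of_pos hκ).ne'
  have hΓ : HasDerivAt Real.Gamma (deriv Real.Gamma κ) κ :=
    (hasDerivAt_rGamma hκ).differentiableAt.hasDerivAt
  have h1 : HasDerivAt (fun κ : ℝ => Real.log (κ / μ)) ((1/μ) / (κ/μ)) κ :=
    ((hasDerivAt_id κ).div_const μ).log (by positivity)
  have h2 : HasDerivAt (fun κ => Real.log (Real.Gamma κ))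
      (deriv Real.Gamma κ / Real.Gamma κ) κ := hΓ.log hΓne
  have h3 : HasDerivAt (fun κ : ℝ => (κ - 1) * digamma κ)
      (1 * digamma κ + (κ - 1) * trigamma κ) κ :=
    ((hasDerivAt_id κ).sub_const 1).mul (hasDerivAt_digamma hκ)
  have h := (((hasDerivAt_id κ).sub h1).add h2).sub h3
  have hdig : deriv Real.Gamma κ / Real.Gamma κ = digamma κ := rfl
  rw [hdig] at h
  refine h.congr_deriv ?_
  have hκ0 : κ ≠ 0 := hκ.ne'
  field_simp
  ring

theorem gamma_entropy_deriv_kappa (μ : ℝ) (hμ : 0 < μ) :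
    DifferentiableOn ℝ (fun κ => gammaEntropy μ κ) (Set.Ioi 0) ∧
    (∀ κ : ℝ, 0 < κ → HasDerivAt (fun κ => gammaEntropy μ κ)
      (-((κ - 1) * (κ * trigamma κ - 1)) / κ) κ) := by
  constructor
  · intro κ hκ
    exact (gammaEntropy_hasDerivAt μ hμ (Set.mem_Ioi.mp hκ)).differentiableAt.differentiableWithinAt
  · intro κ hκ
    exact gammaEntropy_hasDerivAt μ hμ hκ
end

section
/- For every fixed mean μ > 0, the gamma entropy S_f(μ, κ) = κ - log(κ/μ) + log Γ(κ) - (κ - 1)ψ(κ) attains its maximum over κ ∈ (0, ∞) uniquely at κ = 1, where S_f(μ, 1) = 1 + log μ; that is, S_f(μ, κ) < 1 + log μ for all κ > 0 with κ ≠ 1. -/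
open MeasureTheory Set

namespace GammaEntropyAux

noncomputable def uu (s : ℝ) : ℝ := 1 + Real.log s - s

noncomputable def pp (x s : ℝ) : ℝ := Real.exp (x * uu s) / s

noncomputable def KK (x : ℝ) : ℝ := ∫ s in Ioi (0:ℝ), pp x s

noncomputable def cc (κ : ℝ) : ℝ := (∫ s in Ioi (0:ℝ), uu s * pp κ s) / KK κ

lemma pp_pos {x s : ℝ} (hs : 0 < s) : 0 < pp x s :=
  div_pos (Real.exp_pos _) hs

lemma continuousOn_uu : ContinuousOn uu (Ioi 0) :=
  (continuousOn_const.add (Real.continuousOn_log.mono fun _ hs => ne_of_gt hs)).sub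
    continuousOn_id

lemma continuousOn_pp (x : ℝ) : ContinuousOn (pp x) (Ioi 0) :=
  (Real.continuous_exp.comp_continuousOn (continuousOn_const.mul continuousOn_uu)).div
    continuousOn_id (fun _ hs => ne_of_gt hs)

lemma pp_eq {x : ℝ} (hx : 0 < x) {s : ℝ} (hs : 0 < s) :
    pp x s = (Real.exp x * x ^ (1 - x)) * (Real.exp (-(x * s)) * (x * s) ^ (x - 1)) := by
  have h1 : (x * s) ^ (x - 1) = x ^ (x - 1) * s ^ (x - 1) := Real.mul_rpow hx.le hs.le
  have h2 : x ^ (1 - x) * x ^ (x - 1) = 1 := by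
    rw [← Real.rpow_add hx]; norm_num
  have h3 : s ^ (x - 1) = s ^ x / s := by
    nth_rewrite 2 [show x = x - 1 + 1 by ring]
    rw [Real.rpow_add hs, Real.rpow_one]
    field_simp
  have h4 : s ^ x = Real.exp (x * Real.log s) := by
    rw [Real.rpow_def_of_pos hs, mul_comm]
  rw [h1, h3, h4]
  unfold pp uu
  rw [show x * (1 + Real.log s - s) = x + x * Real.log s + -(x * s) by ring,
    Real.exp_add, Real.exp_add]
  rw [show Real.exp x * x ^ (1 - x) *
        (Real.exp (-(x * s)) * (x ^ (x - 1) * (Real.exp (x * Real.log s) / s)))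
      = Real.exp x * Real.exp (x * Real.log s) * Real.exp (-(x * s)) / s *
        (x ^ (1 - x) * x ^ (x - 1)) by ring, h2]
  ring

lemma integrableOn_pp {x : ℝ} (hx : 0 < x) : IntegrableOn (pp x) (Ioi (0:ℝ)) := by
  have base : IntegrableOn (fun t => Real.exp (-t) * t ^ (x - 1)) (Ioi (0:ℝ)) :=
    Real.GammaIntegral_convergent hx
  have comp : IntegrableOn (fun s => Real.exp (-(x * s)) * (x * s) ^ (x - 1)) (Ioi (0:ℝ)) := by
    have h := (integrableOn_Ioi_comp_mul_left_iff
      (fun t => Real.exp (-t) * t ^ (x - 1)) 0 hx).mpr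
    rw [mul_zero] at h
    exact h base
  exact IntegrableOn.congr_fun (comp.const_mul (Real.exp x * x ^ (1 - x)))
    (fun s hs => (pp_eq hx hs).symm) measurableSet_Ioi

lemma KK_eq {x : ℝ} (hx : 0 < x) :
    KK x = Real.exp x * Real.Gamma x * x ^ (-x) := by
  have hsub : (∫ s in Ioi (0:ℝ), Real.exp (-(x * s)) * (x * s) ^ (x - 1))
      = x⁻¹ • ∫ t in Ioi (x * 0), Real.exp (-t) * t ^ (x - 1) :=
    MeasureTheory.integral_comp_mul_left_Ioi (fun t => Real.exp (-t) * t ^ (x - 1)) 0 hx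
  rw [mul_zero] at hsub
  have hG : Real.Gamma x = ∫ t in Ioi (0:ℝ), Real.exp (-t) * t ^ (x - 1) :=
    Real.Gamma_eq_integral hx
  have h1 : KK x = ∫ s in Ioi (0:ℝ),
      (Real.exp x * x ^ (1 - x)) * (Real.exp (-(x * s)) * (x * s) ^ (x - 1)) :=
    setIntegral_congr_fun measurableSet_Ioi (fun s hs => pp_eq hx hs)
  rw [h1, MeasureTheory.integral_const_mul, hsub, ← hG, smul_eq_mul,
    show x⁻¹ = x ^ (-1 : ℝ) by rw [Real.rpow_neg_one]]
  rw [show Real.exp x * x ^ (1 - x) * (x ^ (-1:ℝ) * Real.Gamma x)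
      = Real.exp x * Real.Gamma x * (x ^ (1 - x) * x ^ (-1:ℝ)) by ring, ← Real.rpow_add hx]
  norm_num
  left
  ring_nf

lemma KK_pos {x : ℝ} (hx : 0 < x) : 0 < KK x := by
  rw [KK_eq hx]
  have := Real.Gamma_pos_of_pos hx
  positivity

lemma log_KK {x : ℝ} (hx : 0 < x) :
    Real.log (KK x) = x + Real.log (Real.Gamma x) - x * Real.log x := by
  have hΓ := Real.Gamma_pos_of_pos hx
  rw [KK_eq hx,
    Real.log_mul (by positivity) (by positivity : (0:ℝ) < x ^ (-x)).ne',
    Real.log_mul (Real.exp_pos x).ne' hΓ.ne', Real.log_exp, Real.log_rpow hx]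
  ring

lemma uu_nonpos {s : ℝ} (hs : 0 < s) : uu s ≤ 0 := by
  have := Real.log_le_sub_one_of_pos hs
  unfold uu; linarith

lemma integrableOn_uu_pp {x : ℝ} (hx : 0 < x) :
    IntegrableOn (fun s => uu s * pp x s) (Ioi (0:ℝ)) := by
  have hx2 : 0 < x / 2 := by linarith
  have hmaj : IntegrableOn (fun s => (2 / x) * pp (x / 2) s) (Ioi (0:ℝ)) :=
    (integrableOn_pp hx2).const_mul _
  refine MeasureTheory.Integrable.mono hmaj
    ((continuousOn_uu.mul (continuousOn_pp x)).aestronglyMeasurable measurableSet_Ioi) ?_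
  refine (ae_restrict_iff' measurableSet_Ioi).mpr (Filter.Eventually.of_forall ?_)
  intro s hs
  have hs' : (0:ℝ) < s := hs
  set t : ℝ := -uu s with ht
  have ht0 : 0 ≤ t := neg_nonneg.mpr (uu_nonpos hs')
  have hle : x / 2 * t ≤ Real.exp (x / 2 * t) := by
    have := Real.add_one_le_exp (x / 2 * t); linarith
  have hbound : t * Real.exp (-(x / 2 * t)) ≤ 2 / x := by
    rw [Real.exp_neg, ← div_eq_mul_inv,
      div_le_div_iff₀ (Real.exp_pos _) hx]
    nlinarith [Real.exp_pos (x / 2 * t)]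
  have hppx : pp x s = Real.exp (-(x / 2 * t)) * Real.exp (-(x / 2 * t)) / s := by
    unfold pp
    rw [← Real.exp_add]
    congr 1
    rw [ht]; ring
  have hpp2 : pp (x / 2) s = Real.exp (-(x / 2 * t)) / s := by
    unfold pp
    congr 1
    rw [ht]; ring
  rw [Real.norm_eq_abs, Real.norm_eq_abs, abs_mul,
    abs_of_nonpos (uu_nonpos hs'), abs_of_pos (pp_pos hs'),
    abs_of_pos (mul_pos (div_pos two_pos hx) (pp_pos hs')), hppx, hpp2]
  rw [show -uu s * (Real.exp (-(x / 2 * t)) * Real.exp (-(x / 2 * t)) / s)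
      = (t * Real.exp (-(x / 2 * t))) * (Real.exp (-(x / 2 * t)) / s) by rw [ht]; ring]
  exact mul_le_mul_of_nonneg_right hbound (by positivity)


lemma key {κ y : ℝ} (hκ : 0 < κ) (hy : 0 < y) :
    KK κ * Real.exp ((y - κ) * cc κ) ≤ KK y ∧
      (y ≠ κ → KK κ * Real.exp ((y - κ) * cc κ) < KK y) := by
  set d : ℝ := y - κ with hd
  set c : ℝ := cc κ with hcdef
  set E : ℝ := Real.exp (d * c) with hE
  have hEpos : 0 < E := Real.exp_pos _
  set G : ℝ → ℝ := fun s => pp y s - (E * (1 - d * c)) * pp κ s - (E * d) * (uu s * pp κ s)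
    with hG
  have hGint : IntegrableOn G (Ioi (0:ℝ)) :=
    (((integrableOn_pp hy).sub ((integrableOn_pp hκ).const_mul _)).sub
      ((integrableOn_uu_pp hκ).const_mul _))
  have hmean : (∫ s in Ioi (0:ℝ), uu s * pp κ s) = c * KK κ := by
    rw [hcdef]
    unfold cc
    field_simp [(KK_pos hκ).ne']
  have i2 : IntegrableOn (fun s => (E * (1 - d * c)) * pp κ s) (Ioi (0:ℝ)) :=
    (integrableOn_pp hκ).const_mul _
  have i3 : IntegrableOn (fun s => (E * d) * (uu s * pp κ s)) (Ioi (0:ℝ)) :=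
    (integrableOn_uu_pp hκ).const_mul _
  have i1 : IntegrableOn (fun s => pp y s - (E * (1 - d * c)) * pp κ s) (Ioi (0:ℝ)) :=
    (integrableOn_pp hy).sub i2
  have hGval : ∫ s in Ioi (0:ℝ), G s = KK y - E * KK κ := by
    have h1 : ∫ s in Ioi (0:ℝ), G s
        = (∫ s in Ioi (0:ℝ), (pp y s - (E * (1 - d * c)) * pp κ s))
          - ∫ s in Ioi (0:ℝ), (E * d) * (uu s * pp κ s) :=
      MeasureTheory.integral_sub i1 i3
    have h2 : ∫ s in Ioi (0:ℝ), (pp y s - (E * (1 - d * c)) * pp κ s)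
        = KK y - (E * (1 - d * c)) * KK κ := by
      rw [MeasureTheory.integral_sub (integrableOn_pp hy) i2,
        MeasureTheory.integral_const_mul]
      rfl
    rw [h1, h2, MeasureTheory.integral_const_mul, hmean]
    ring
  have hGpt : ∀ s ∈ Ioi (0:ℝ), G s
      = (E * pp κ s) * (Real.exp (d * (uu s - c)) - 1 - d * (uu s - c)) := by
    intro s hs
    have h5 : pp y s = Real.exp (d * uu s) * pp κ s := by
      unfold pp
      rw [show y * uu s = d * uu s + κ * uu s by rw [hd]; ring, Real.exp_add, mul_div_assoc]
    have h6 : Real.exp (d * uu s) = E * Real.exp (d * (uu s - c)) := by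
      rw [hE, ← Real.exp_add]
      congr 1
      ring
    rw [hG]
    show pp y s - (E * (1 - d * c)) * pp κ s - (E * d) * (uu s * pp κ s) = _
    rw [h5, h6]
    ring
  have hnonneg : ∀ s ∈ Ioi (0:ℝ), 0 ≤ G s := by
    intro s hs
    rw [hGpt s hs]
    have h7 := Real.add_one_le_exp (d * (uu s - c))
    have := pp_pos (x := κ) (mem_Ioi.mp hs)
    have h8 : 0 ≤ Real.exp (d * (uu s - c)) - 1 - d * (uu s - c) := by linarith
    positivity
  have hle : KK κ * E ≤ KK y := by
    have h9 : 0 ≤ ∫ s in Ioi (0:ℝ), G s := setIntegral_nonneg measurableSet_Ioi hnonneg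
    rw [hGval] at h9
    linarith
  refine ⟨by linarith [mul_comm (KK κ) E], fun hyκ => ?_⟩
  have hdne : d ≠ 0 := sub_ne_zero.mpr hyκ
  -- the level set of uu is small
  have hderivu : ∀ s : ℝ, s ≠ 0 → HasDerivAt uu (s⁻¹ - 1) s := by
    intro s hs
    have h := ((Real.hasDerivAt_log hs).const_add 1).sub (hasDerivAt_id s)
    exact h
  have hmono : StrictMonoOn uu (Ioc (0:ℝ) 1) := by
    refine strictMonoOn_of_deriv_pos (convex_Ioc 0 1)
      (continuousOn_uu.mono (fun s hs => hs.1)) ?_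
    intro s hs
    rw [interior_Ioc] at hs
    rw [(hderivu s hs.1.ne').deriv]
    have : 1 < s⁻¹ := one_lt_inv₀ hs.1 |>.mpr hs.2
    linarith
  have hanti : StrictAntiOn uu (Ici (1:ℝ)) := by
    refine strictAntiOn_of_deriv_neg (convex_Ici 1)
      (continuousOn_uu.mono (fun s hs => show (0:ℝ) < s from lt_of_lt_of_le one_pos hs)) ?_
    intro s hs
    rw [interior_Ici] at hs
    rw [(hderivu s (lt_trans one_pos hs).ne').deriv]
    have : s⁻¹ < 1 := inv_lt_one_of_one_lt₀ hs
    linarith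
  set Z : Set ℝ := {s : ℝ | uu s = c} with hZdef
  have hZnull : volume (Z ∩ Ioi 0) = 0 := by
    have hsplit : Z ∩ Ioi 0 ⊆ (Z ∩ Ioc 0 1) ∪ (Z ∩ Ici 1) := by
      rintro s ⟨hsZ, hs0⟩
      rcases le_or_gt s 1 with h | h
      · exact Or.inl ⟨hsZ, hs0, h⟩
      · exact Or.inr ⟨hsZ, h.le⟩
    refine measure_mono_null hsplit (measure_union_null ?_ ?_)
    · refine Set.Countable.measure_zero ?_ _
      refine Set.Subsingleton.countable ?_
      rintro a ⟨haZ, haI⟩ b ⟨hbZ, hbI⟩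
      exact hmono.injOn haI hbI (haZ.trans hbZ.symm)
    · refine Set.Countable.measure_zero ?_ _
      refine Set.Subsingleton.countable ?_
      rintro a ⟨haZ, haI⟩ b ⟨hbZ, hbI⟩
      exact hanti.injOn haI hbI (haZ.trans hbZ.symm)
  have hsupp : Ioi (0:ℝ) \ Z ⊆ Function.support G ∩ Ioi 0 := by
    intro s hs
    refine ⟨?_, hs.1⟩
    have hs0 : (0:ℝ) < s := hs.1
    have hv : d * (uu s - c) ≠ 0 := mul_ne_zero hdne (sub_ne_zero.mpr hs.2)
    have h10 := Real.add_one_lt_exp hv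
    have hppκ := pp_pos (x := κ) hs0
    have : 0 < G s := by
      rw [hGpt s hs.1]
      have h11 : 0 < Real.exp (d * (uu s - c)) - 1 - d * (uu s - c) := by linarith
      positivity
    exact this.ne'
  have hmeas : 0 < volume (Function.support G ∩ Ioi 0) := by
    refine lt_of_lt_of_le ?_ (measure_mono hsupp)
    have : Ioi (0:ℝ) \ Z = Ioi 0 \ (Z ∩ Ioi 0) := by
      ext s; simp only [mem_diff, mem_inter_iff]; tauto
    rw [this, measure_diff_null hZnull, Real.volume_Ioi]
    exact ENNReal.zero_lt_top
  have hpos : 0 < ∫ s in Ioi (0:ℝ), G s := by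
    rw [MeasureTheory.setIntegral_pos_iff_support_of_nonneg_ae
      ((ae_restrict_iff' measurableSet_Ioi).mpr (Filter.Eventually.of_forall hnonneg)) hGint]
    exact hmeas
  rw [hGval] at hpos
  linarith [mul_comm (KK κ) E]



lemma cc_eq {κ : ℝ} (hκ : 0 < κ) : cc κ = digamma κ - Real.log κ := by
  have hΓpos := Real.Gamma_pos_of_pos hκ
  have hΓd : DifferentiableAt ℝ Real.Gamma κ :=
    Real.differentiableAt_Gamma (fun m =>
      ne_of_gt (lt_of_le_of_lt (neg_nonpos.mpr (Nat.cast_nonneg m)) hκ))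
  have hlog : HasDerivAt (fun t => Real.log (Real.Gamma t)) (digamma κ) κ :=
    hΓd.hasDerivAt.log hΓpos.ne'
  have hmul : HasDerivAt (fun t : ℝ => t * Real.log t) (Real.log κ + 1) κ := by
    have h := (hasDerivAt_id κ).mul (Real.hasDerivAt_log hκ.ne')
    have e : 1 * Real.log κ + id κ * κ⁻¹ = Real.log κ + 1 := by
      simp only [id_eq, one_mul]
      field_simp
    rwa [e] at h
  have hρ : HasDerivAt
      (fun y => Real.log (Real.Gamma y) + y - y * Real.log y - (y - κ) * cc κ)
      (digamma κ - Real.log κ - cc κ) κ := by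
    have h := ((hlog.add (hasDerivAt_id κ)).sub hmul).sub
      (((hasDerivAt_id κ).sub_const κ).mul_const (cc κ))
    have heq : digamma κ + 1 - (Real.log κ + 1) - 1 * cc κ
        = digamma κ - Real.log κ - cc κ := by ring
    rwa [heq] at h
  have hmin : IsLocalMin
      (fun y => Real.log (Real.Gamma y) + y - y * Real.log y - (y - κ) * cc κ) κ := by
    filter_upwards [isOpen_Ioi.mem_nhds (show κ ∈ Ioi (0:ℝ) from hκ)] with y hy
    have hy' : (0:ℝ) < y := hy
    have hKle := (key hκ hy').1
    have hlogle := Real.log_le_log (mul_pos (KK_pos hκ) (Real.exp_pos _)) hKle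
    rw [Real.log_mul (KK_pos hκ).ne' (Real.exp_pos _).ne', Real.log_exp,
      log_KK hκ, log_KK hy'] at hlogle
    have h0 : (κ - κ) * cc κ = 0 := by ring
    linarith
  have hd0 := hmin.deriv_eq_zero
  rw [hρ.deriv] at hd0
  linarith

lemma tangent {κ : ℝ} (hκ : 0 < κ) (hκ1 : κ ≠ 1) :
    Real.log (Real.Gamma κ) + κ - Real.log κ - (κ - 1) * digamma κ < 1 := by
  have hne : (1:ℝ) ≠ κ := fun h => hκ1 h.symm
  have hlt := (key hκ one_pos).2 hne
  have hloglt := Real.log_lt_log (mul_pos (KK_pos hκ) (Real.exp_pos _)) hlt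
  rw [Real.log_mul (KK_pos hκ).ne' (Real.exp_pos _).ne', Real.log_exp,
    log_KK hκ, log_KK one_pos, Real.Gamma_one, Real.log_one, cc_eq hκ] at hloglt
  have hE : κ + Real.log (Real.Gamma κ) - κ * Real.log κ
        + (1 - κ) * (digamma κ - Real.log κ)
      = Real.log (Real.Gamma κ) + κ - Real.log κ - (κ - 1) * digamma κ := by ring
  linarith

end GammaEntropyAux

theorem gamma_entropy_max_at_one (μ : ℝ) (hμ : 0 < μ) :
    gammaEntropy μ 1 = 1 + Real.log μ ∧
    ∀ κ : ℝ, 0 < κ → κ ≠ 1 → gammaEntropy μ κ < 1 + Real.log μ := by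
  constructor
  · unfold gammaEntropy
    rw [Real.Gamma_one, Real.log_one, Real.log_div one_ne_zero hμ.ne', Real.log_one]
    ring
  · intro κ hκ hκ1
    have h := GammaEntropyAux.tangent hκ hκ1
    unfold gammaEntropy
    rw [Real.log_div hκ.ne' hμ.ne']
    linarith
end

section
/- For all α₁, c, α₂ > 0 and every x > 0, the marginal density of the first variable of the McKay distribution is a gamma density: ∫ₓ^∞ m(x, y) dy = c^{α₁} x^{α₁-1} e^{-cx} / Γ(α₁). -/
/-- The McKay bivariate gamma density with parameters `α₁ c α₂`, on `0 < x < y`. -/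
noncomputable def mckayPDF (α₁ c α₂ : ℝ) (x y : ℝ) : ℝ :=
  c ^ (α₁ + α₂) * x ^ (α₁ - 1) * (y - x) ^ (α₂ - 1) * Real.exp (-(c * y)) /
    (Real.Gamma α₁ * Real.Gamma α₂)

lemma mckay_key (c x α₂ : ℝ) (hc : 0 < c) (h₂ : 0 < α₂) :
    ∫ y in Set.Ioi x, (y - x) ^ (α₂ - 1) * Real.exp (-(c * y)) =
      Real.exp (-(c * x)) * ((1 / c) ^ α₂ * Real.Gamma α₂) := by
  have h1 : ∫ y in Set.Ioi x, (y - x) ^ (α₂ - 1) * Real.exp (-(c * y)) =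
      ∫ t in Set.Ioi (0:ℝ), (t ^ (α₂ - 1) * Real.exp (-(c * (t + x)))) := by
    rw [← MeasureTheory.integral_indicator measurableSet_Ioi,
      ← MeasureTheory.integral_add_right_eq_self
        (Set.indicator (Set.Ioi x) (fun y => (y - x) ^ (α₂ - 1) * Real.exp (-(c * y)))) x,
      ← MeasureTheory.integral_indicator measurableSet_Ioi]
    congr 1
    ext t
    by_cases ht : t ∈ Set.Ioi (0:ℝ)
    · rw [Set.indicator_of_mem ht, Set.indicator_of_mem (by simpa using ht)]
      simp
    · rw [Set.indicator_of_notMem ht, Set.indicator_of_notMem (by simpa using ht)]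
  rw [h1]
  have : ∀ t : ℝ, t ^ (α₂ - 1) * Real.exp (-(c * (t + x))) =
      Real.exp (-(c * x)) * (t ^ (α₂ - 1) * Real.exp (-(c * t))) := by
    intro t
    rw [mul_add, neg_add, Real.exp_add]
    ring
  simp_rw [this]
  rw [MeasureTheory.integral_const_mul, Real.integral_rpow_mul_exp_neg_mul_Ioi h₂ hc]

theorem mckay_marginal_x (α₁ c α₂ : ℝ) (h₁ : 0 < α₁) (hc : 0 < c) (h₂ : 0 < α₂)
    (x : ℝ) (hx : 0 < x) :
    ∫ y in Set.Ioi x, mckayPDF α₁ c α₂ x y =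
      c ^ α₁ * x ^ (α₁ - 1) * Real.exp (-(c * x)) / Real.Gamma α₁ := by
  have hΓ₂ : Real.Gamma α₂ ≠ 0 := (Real.Gamma_pos_of_pos h₂).ne'
  unfold mckayPDF
  have : ∀ y : ℝ, c ^ (α₁ + α₂) * x ^ (α₁ - 1) * (y - x) ^ (α₂ - 1) * Real.exp (-(c * y)) /
      (Real.Gamma α₁ * Real.Gamma α₂) =
      (c ^ (α₁ + α₂) * x ^ (α₁ - 1) / (Real.Gamma α₁ * Real.Gamma α₂)) *
        ((y - x) ^ (α₂ - 1) * Real.exp (-(c * y))) := by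
    intro y; ring
  simp_rw [this]
  rw [MeasureTheory.integral_const_mul, mckay_key c x α₂ hc h₂]
  have hpow : c ^ (α₁ + α₂) * (1 / c) ^ α₂ = c ^ α₁ := by
    rw [Real.rpow_add hc, one_div, ← Real.rpow_neg_one c, ← Real.rpow_mul hc.le,
      mul_assoc, ← Real.rpow_add hc]
    norm_num
  field_simp
  rw [← hpow]
end

section
/- For all α₁, c, α₂ > 0 and every y > 0, the marginal density of the second variable of the McKay distribution is a gamma density with shape α₁ + α₂: ∫₀^y m(x, y) dx = c^{α₁+α₂} y^{α₁+α₂-1} e^{-cy} / Γ(α₁ + α₂). -/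
lemma real_beta_scaled (a b : ℝ) (ha : 0 < a) (hb : 0 < b) {y : ℝ} (hy : 0 < y) :
    ∫ x in (0 : ℝ)..y, x ^ (a - 1) * (y - x) ^ (b - 1) =
      y ^ (a + b - 1) * (Real.Gamma a * Real.Gamma b / Real.Gamma (a + b)) := by
  have hre : ∀ r : ℝ, 0 < r → 0 < Complex.re (r : ℂ) := fun r hr => by simpa using hr
  have hβ := Complex.betaIntegral_scaled (a : ℂ) (b : ℂ) hy
  have hΓ := Complex.Gamma_mul_Gamma_eq_betaIntegral (hre a ha) (hre b hb)
  have hΓab : Complex.Gamma ((a : ℂ) + b) ≠ 0 := by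
    rw [← Complex.ofReal_add, Complex.Gamma_ofReal]
    exact_mod_cast (Real.Gamma_pos_of_pos (by linarith)).ne'
  have hβval : Complex.betaIntegral a b =
      Complex.Gamma a * Complex.Gamma b / Complex.Gamma ((a : ℂ) + b) := by
    rw [eq_div_iff hΓab]
    linear_combination -hΓ
  have hconv : (∫ x in (0 : ℝ)..y, (x : ℂ) ^ ((a : ℂ) - 1) * ((y : ℂ) - x) ^ ((b : ℂ) - 1)) =
      ((∫ x in (0 : ℝ)..y, x ^ (a - 1) * (y - x) ^ (b - 1) : ℝ) : ℂ) := by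
    rw [← intervalIntegral.integral_ofReal]
    refine intervalIntegral.integral_congr fun x hx => ?_
    rw [Set.uIcc_of_le hy.le] at hx
    rw [Complex.ofReal_mul, Complex.ofReal_cpow hx.1, Complex.ofReal_cpow (by linarith [hx.2] : (0:ℝ) ≤ y - x)]
    push_cast
    ring
  have key := hβ
  rw [hconv, hβval] at key
  have : ((∫ x in (0 : ℝ)..y, x ^ (a - 1) * (y - x) ^ (b - 1) : ℝ) : ℂ) =
      ((y ^ (a + b - 1) * (Real.Gamma a * Real.Gamma b / Real.Gamma (a + b)) : ℝ) : ℂ) := by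
    rw [key, show ((a:ℂ)+b-1) = ((a+b-1:ℝ):ℂ) by push_cast; ring,
      show ((a:ℂ)+b) = ((a+b:ℝ):ℂ) by push_cast; ring, ← Complex.ofReal_cpow hy.le,
      Complex.Gamma_ofReal, Complex.Gamma_ofReal, Complex.Gamma_ofReal]
    push_cast
    ring
  exact_mod_cast this

theorem mckay_marginal_y (α₁ c α₂ : ℝ) (h₁ : 0 < α₁) (hc : 0 < c) (h₂ : 0 < α₂)
    (y : ℝ) (hy : 0 < y) :
    ∫ x in (0 : ℝ)..y, mckayPDF α₁ c α₂ x y =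
      c ^ (α₁ + α₂) * y ^ (α₁ + α₂ - 1) * Real.exp (-(c * y)) /
        Real.Gamma (α₁ + α₂) := by
  have hG1 := Real.Gamma_pos_of_pos h₁
  have hG2 := Real.Gamma_pos_of_pos h₂
  have hG3 := Real.Gamma_pos_of_pos (show (0:ℝ) < α₁ + α₂ by linarith)
  have hpdf : ∀ x : ℝ, mckayPDF α₁ c α₂ x y =
      (c ^ (α₁ + α₂) * Real.exp (-(c * y)) / (Real.Gamma α₁ * Real.Gamma α₂)) *
        (x ^ (α₁ - 1) * (y - x) ^ (α₂ - 1)) := by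
    intro x; unfold mckayPDF; ring
  simp_rw [hpdf]
  rw [intervalIntegral.integral_const_mul, real_beta_scaled α₁ α₂ h₁ h₂ hy]
  field_simp
end

section
/- For all α₁, c, α₂ > 0, the covariance of the two coordinates under the McKay density equals α₁/c²; that is, ∫₀^∞ ∫ₓ^∞ x y m(x, y) dy dx - (∫₀^∞ ∫ₓ^∞ x m(x, y) dy dx)(∫₀^∞ ∫ₓ^∞ y m(x, y) dy dx) = α₁/c². -/
open MeasureTheory Set

lemma mckay_shift_Ioi (f : ℝ → ℝ) (x : ℝ) :
    ∫ y in Set.Ioi x, f y = ∫ t in Set.Ioi (0 : ℝ), f (t + x) := by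
  rw [← integral_indicator measurableSet_Ioi, ← integral_indicator measurableSet_Ioi,
    ← MeasureTheory.integral_add_right_eq_self (Set.indicator (Set.Ioi x) f) x]
  congr 1
  funext t
  simp only [Set.indicator_apply, Set.mem_Ioi, lt_add_iff_pos_left]

lemma mckay_intGamma {c : ℝ} (hc : 0 < c) {a : ℝ} (ha : 0 < a) :
    MeasureTheory.IntegrableOn (fun t : ℝ => t ^ (a - 1) * Real.exp (-(c * t)))
      (Set.Ioi 0) := by
  have h := integrableOn_rpow_mul_exp_neg_mul_rpow (s := a - 1) (p := 1) (b := c)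
    (by linarith) one_pos hc
  refine h.congr_fun (fun t ht => ?_) measurableSet_Ioi
  simp only [Real.rpow_one, neg_mul]

lemma mckay_inner0 {c : ℝ} (hc : 0 < c) {a : ℝ} (ha : 0 < a) (x : ℝ) :
    ∫ y in Set.Ioi x, (y - x) ^ (a - 1) * Real.exp (-(c * y)) =
      Real.exp (-(c * x)) * ((1 / c) ^ a * Real.Gamma a) := by
  rw [mckay_shift_Ioi]
  have h : ∀ t : ℝ, (t + x - x) ^ (a - 1) * Real.exp (-(c * (t + x))) =
      (t ^ (a - 1) * Real.exp (-(c * t))) * Real.exp (-(c * x)) := by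
    intro t
    rw [add_sub_cancel_right, mul_add c, neg_add, Real.exp_add]
    ring
  simp_rw [h]
  rw [MeasureTheory.integral_mul_const, Real.integral_rpow_mul_exp_neg_mul_Ioi ha hc]
  ring

lemma mckay_inner1 {c : ℝ} (hc : 0 < c) {a : ℝ} (ha : 0 < a) {x : ℝ} (hx : 0 < x) :
    ∫ y in Set.Ioi x, y * ((y - x) ^ (a - 1) * Real.exp (-(c * y))) =
      Real.exp (-(c * x)) * (x * ((1 / c) ^ a * Real.Gamma a)
        + (1 / c) ^ (a + 1) * Real.Gamma (a + 1)) := by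
  rw [mckay_shift_Ioi]
  rw [MeasureTheory.setIntegral_congr_fun measurableSet_Ioi
    (g := fun t => (x * (t ^ (a - 1) * Real.exp (-(c * t)))
      + t ^ (a + 1 - 1) * Real.exp (-(c * t))) * Real.exp (-(c * x))) ?_]
  · rw [MeasureTheory.integral_mul_const, MeasureTheory.integral_add
      ((mckay_intGamma hc ha).const_mul x) (mckay_intGamma hc (by linarith)),
      MeasureTheory.integral_const_mul, Real.integral_rpow_mul_exp_neg_mul_Ioi ha hc,
      Real.integral_rpow_mul_exp_neg_mul_Ioi (by linarith : (0:ℝ) < a + 1) hc]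
    ring
  · intro t ht
    have ht0 : (0 : ℝ) < t := ht
    simp only
    rw [show a + 1 - 1 = (a - 1) + 1 by ring, Real.rpow_add_one ht0.ne',
      add_sub_cancel_right, mul_add c, neg_add, Real.exp_add]
    ring

lemma mckay_EX (α₁ c α₂ : ℝ) (h₁ : 0 < α₁) (hc : 0 < c) (h₂ : 0 < α₂) :
    (∫ x in Set.Ioi (0 : ℝ), ∫ y in Set.Ioi x, x * mckayPDF α₁ c α₂ x y) = α₁ / c := by
  have hG1 : Real.Gamma α₁ ≠ 0 := (Real.Gamma_pos_of_pos h₁).ne'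
  have hG2 : Real.Gamma α₂ ≠ 0 := (Real.Gamma_pos_of_pos h₂).ne'
  have hinv : ∀ v : ℝ, (1 / c : ℝ) ^ v = c ^ (-v) := by
    intro v
    rw [one_div, ← Real.rpow_neg_one c, ← Real.rpow_mul hc.le]
    norm_num
  have key : ∀ x ∈ Set.Ioi (0 : ℝ),
      (∫ y in Set.Ioi x, x * mckayPDF α₁ c α₂ x y) =
      (c ^ (α₁ + α₂) / (Real.Gamma α₁ * Real.Gamma α₂) * ((1 / c) ^ α₂ * Real.Gamma α₂)) *
        (x ^ (α₁ + 1 - 1) * Real.exp (-(c * x))) := by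
    intro x hx
    have hx0 : (0 : ℝ) < x := hx
    have h : ∀ y : ℝ, x * mckayPDF α₁ c α₂ x y =
        (c ^ (α₁ + α₂) / (Real.Gamma α₁ * Real.Gamma α₂) * (x * x ^ (α₁ - 1))) *
          ((y - x) ^ (α₂ - 1) * Real.exp (-(c * y))) := by
      intro y; unfold mckayPDF; ring
    simp_rw [h]
    rw [MeasureTheory.integral_const_mul, mckay_inner0 hc h₂ x,
      show x * x ^ (α₁ - 1) = x ^ (α₁ + 1 - 1) by
        rw [show α₁ + 1 - 1 = (α₁ - 1) + 1 by ring, Real.rpow_add_one hx0.ne']; ring]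
    ring
  rw [MeasureTheory.setIntegral_congr_fun measurableSet_Ioi key,
    MeasureTheory.integral_const_mul,
    Real.integral_rpow_mul_exp_neg_mul_Ioi (by linarith : (0:ℝ) < α₁ + 1) hc,
    Real.Gamma_add_one h₁.ne', hinv, hinv]
  have hk : c ^ (α₁ + α₂) * c ^ (-α₂) * c ^ (-(α₁ + 1)) = c⁻¹ := by
    rw [← Real.rpow_add hc, ← Real.rpow_add hc,
      show α₁ + α₂ + -α₂ + -(α₁ + 1) = -1 by ring, Real.rpow_neg_one]
  calc c ^ (α₁ + α₂) / (Real.Gamma α₁ * Real.Gamma α₂) * (c ^ (-α₂) * Real.Gamma α₂) *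
        (c ^ (-(α₁ + 1)) * (α₁ * Real.Gamma α₁))
      = (c ^ (α₁ + α₂) * c ^ (-α₂) * c ^ (-(α₁ + 1))) *
        (Real.Gamma α₂ * (α₁ * Real.Gamma α₁)) / (Real.Gamma α₁ * Real.Gamma α₂) := by ring
    _ = α₁ / c := by rw [hk]; field_simp

lemma mckay_EY (α₁ c α₂ : ℝ) (h₁ : 0 < α₁) (hc : 0 < c) (h₂ : 0 < α₂) :
    (∫ x in Set.Ioi (0 : ℝ), ∫ y in Set.Ioi x, y * mckayPDF α₁ c α₂ x y) =
      (α₁ + α₂) / c := by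
  have hG1 : Real.Gamma α₁ ≠ 0 := (Real.Gamma_pos_of_pos h₁).ne'
  have hG2 : Real.Gamma α₂ ≠ 0 := (Real.Gamma_pos_of_pos h₂).ne'
  have hinv : ∀ v : ℝ, (1 / c : ℝ) ^ v = c ^ (-v) := by
    intro v
    rw [one_div, ← Real.rpow_neg_one c, ← Real.rpow_mul hc.le]
    norm_num
  set K : ℝ := c ^ (α₁ + α₂) / (Real.Gamma α₁ * Real.Gamma α₂) with hK
  set D : ℝ := (1 / c) ^ α₂ * Real.Gamma α₂ with hD
  set D' : ℝ := (1 / c) ^ (α₂ + 1) * Real.Gamma (α₂ + 1) with hD'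
  have key : ∀ x ∈ Set.Ioi (0 : ℝ),
      (∫ y in Set.Ioi x, y * mckayPDF α₁ c α₂ x y) =
      (K * D) * (x ^ (α₁ + 1 - 1) * Real.exp (-(c * x)))
        + (K * D') * (x ^ (α₁ - 1) * Real.exp (-(c * x))) := by
    intro x hx
    have hx0 : (0 : ℝ) < x := hx
    have h : ∀ y : ℝ, y * mckayPDF α₁ c α₂ x y =
        (K * x ^ (α₁ - 1)) * (y * ((y - x) ^ (α₂ - 1) * Real.exp (-(c * y)))) := by
      intro y; unfold mckayPDF; rw [hK]; ring
    simp_rw [h]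
    rw [MeasureTheory.integral_const_mul, mckay_inner1 hc h₂ hx0]
    rw [show x ^ (α₁ + 1 - 1) = x ^ (α₁ - 1) * x by
      rw [show α₁ + 1 - 1 = (α₁ - 1) + 1 by ring, Real.rpow_add_one hx0.ne']]
    ring
  rw [MeasureTheory.setIntegral_congr_fun measurableSet_Ioi key,
    MeasureTheory.integral_add
      (((mckay_intGamma hc (by linarith : (0:ℝ) < α₁ + 1))).const_mul (K * D))
      (((mckay_intGamma hc h₁)).const_mul (K * D')),
    MeasureTheory.integral_const_mul, MeasureTheory.integral_const_mul,
    Real.integral_rpow_mul_exp_neg_mul_Ioi (by linarith : (0:ℝ) < α₁ + 1) hc,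
    Real.integral_rpow_mul_exp_neg_mul_Ioi h₁ hc]
  rw [hK, hD, hD', Real.Gamma_add_one h₁.ne', Real.Gamma_add_one h₂.ne',
    hinv, hinv, hinv, hinv]
  have hk1 : c ^ (α₁ + α₂) * c ^ (-α₂) * c ^ (-(α₁ + 1)) = c⁻¹ := by
    rw [← Real.rpow_add hc, ← Real.rpow_add hc,
      show α₁ + α₂ + -α₂ + -(α₁ + 1) = -1 by ring, Real.rpow_neg_one]
  have hk2 : c ^ (α₁ + α₂) * c ^ (-(α₂ + 1)) * c ^ (-α₁) = c⁻¹ := by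
    rw [← Real.rpow_add hc, ← Real.rpow_add hc,
      show α₁ + α₂ + -(α₂ + 1) + -α₁ = -1 by ring, Real.rpow_neg_one]
  calc c ^ (α₁ + α₂) / (Real.Gamma α₁ * Real.Gamma α₂) * (c ^ (-α₂) * Real.Gamma α₂) *
          (c ^ (-(α₁ + 1)) * (α₁ * Real.Gamma α₁)) +
        c ^ (α₁ + α₂) / (Real.Gamma α₁ * Real.Gamma α₂) *
          (c ^ (-(α₂ + 1)) * (α₂ * Real.Gamma α₂)) * (c ^ (-α₁) * Real.Gamma α₁)
      = (c ^ (α₁ + α₂) * c ^ (-α₂) * c ^ (-(α₁ + 1))) *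
          (Real.Gamma α₂ * (α₁ * Real.Gamma α₁)) / (Real.Gamma α₁ * Real.Gamma α₂) +
        (c ^ (α₁ + α₂) * c ^ (-(α₂ + 1)) * c ^ (-α₁)) *
          ((α₂ * Real.Gamma α₂) * Real.Gamma α₁) / (Real.Gamma α₁ * Real.Gamma α₂) := by
        ring
    _ = (α₁ + α₂) / c := by rw [hk1, hk2]; field_simp

lemma mckay_EXY (α₁ c α₂ : ℝ) (h₁ : 0 < α₁) (hc : 0 < c) (h₂ : 0 < α₂) :
    (∫ x in Set.Ioi (0 : ℝ), ∫ y in Set.Ioi x, x * y * mckayPDF α₁ c α₂ x y) =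
      α₁ * (α₁ + α₂ + 1) / (c * c) := by
  have hG1 : Real.Gamma α₁ ≠ 0 := (Real.Gamma_pos_of_pos h₁).ne'
  have hG2 : Real.Gamma α₂ ≠ 0 := (Real.Gamma_pos_of_pos h₂).ne'
  have hinv : ∀ v : ℝ, (1 / c : ℝ) ^ v = c ^ (-v) := by
    intro v
    rw [one_div, ← Real.rpow_neg_one c, ← Real.rpow_mul hc.le]
    norm_num
  set K : ℝ := c ^ (α₁ + α₂) / (Real.Gamma α₁ * Real.Gamma α₂) with hK
  set D : ℝ := (1 / c) ^ α₂ * Real.Gamma α₂ with hD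
  set D' : ℝ := (1 / c) ^ (α₂ + 1) * Real.Gamma (α₂ + 1) with hD'
  have key : ∀ x ∈ Set.Ioi (0 : ℝ),
      (∫ y in Set.Ioi x, x * y * mckayPDF α₁ c α₂ x y) =
      (K * D) * (x ^ (α₁ + 2 - 1) * Real.exp (-(c * x)))
        + (K * D') * (x ^ (α₁ + 1 - 1) * Real.exp (-(c * x))) := by
    intro x hx
    have hx0 : (0 : ℝ) < x := hx
    have h : ∀ y : ℝ, x * y * mckayPDF α₁ c α₂ x y =
        (K * (x * x ^ (α₁ - 1))) * (y * ((y - x) ^ (α₂ - 1) * Real.exp (-(c * y)))) := by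
      intro y; unfold mckayPDF; rw [hK]; ring
    simp_rw [h]
    rw [MeasureTheory.integral_const_mul, mckay_inner1 hc h₂ hx0]
    rw [show x ^ (α₁ + 1 - 1) = x ^ (α₁ - 1) * x by
      rw [show α₁ + 1 - 1 = (α₁ - 1) + 1 by ring, Real.rpow_add_one hx0.ne']]
    rw [show x ^ (α₁ + 2 - 1) = x ^ (α₁ - 1) * x * x by
      rw [show α₁ + 2 - 1 = ((α₁ - 1) + 1) + 1 by ring, Real.rpow_add_one hx0.ne',
        Real.rpow_add_one hx0.ne']]
    ring
  rw [MeasureTheory.setIntegral_congr_fun measurableSet_Ioi key,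
    MeasureTheory.integral_add
      (((mckay_intGamma hc (by linarith : (0:ℝ) < α₁ + 2))).const_mul (K * D))
      (((mckay_intGamma hc (by linarith : (0:ℝ) < α₁ + 1))).const_mul (K * D')),
    MeasureTheory.integral_const_mul, MeasureTheory.integral_const_mul,
    Real.integral_rpow_mul_exp_neg_mul_Ioi (by linarith : (0:ℝ) < α₁ + 2) hc,
    Real.integral_rpow_mul_exp_neg_mul_Ioi (by linarith : (0:ℝ) < α₁ + 1) hc]
  rw [hK, hD, hD', show α₁ + 2 = (α₁ + 1) + 1 by ring,
    Real.Gamma_add_one (by positivity : α₁ + 1 ≠ 0), Real.Gamma_add_one h₁.ne',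
    Real.Gamma_add_one h₂.ne', hinv, hinv, hinv, hinv]
  have hk1 : c ^ (α₁ + α₂) * c ^ (-α₂) * c ^ (-(α₁ + 1 + 1)) = c⁻¹ * c⁻¹ := by
    rw [← Real.rpow_add hc, ← Real.rpow_add hc,
      show α₁ + α₂ + -α₂ + -(α₁ + 1 + 1) = -1 + -1 by ring, Real.rpow_add hc,
      Real.rpow_neg_one]
  have hk2 : c ^ (α₁ + α₂) * c ^ (-(α₂ + 1)) * c ^ (-(α₁ + 1)) = c⁻¹ * c⁻¹ := by
    rw [← Real.rpow_add hc, ← Real.rpow_add hc,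
      show α₁ + α₂ + -(α₂ + 1) + -(α₁ + 1) = -1 + -1 by ring, Real.rpow_add hc,
      Real.rpow_neg_one]
  calc c ^ (α₁ + α₂) / (Real.Gamma α₁ * Real.Gamma α₂) * (c ^ (-α₂) * Real.Gamma α₂) *
          (c ^ (-(α₁ + 1 + 1)) * ((α₁ + 1) * (α₁ * Real.Gamma α₁))) +
        c ^ (α₁ + α₂) / (Real.Gamma α₁ * Real.Gamma α₂) *
          (c ^ (-(α₂ + 1)) * (α₂ * Real.Gamma α₂)) *
          (c ^ (-(α₁ + 1)) * (α₁ * Real.Gamma α₁))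
      = (c ^ (α₁ + α₂) * c ^ (-α₂) * c ^ (-(α₁ + 1 + 1))) *
          (Real.Gamma α₂ * ((α₁ + 1) * (α₁ * Real.Gamma α₁))) /
          (Real.Gamma α₁ * Real.Gamma α₂) +
        (c ^ (α₁ + α₂) * c ^ (-(α₂ + 1)) * c ^ (-(α₁ + 1))) *
          ((α₂ * Real.Gamma α₂) * (α₁ * Real.Gamma α₁)) /
          (Real.Gamma α₁ * Real.Gamma α₂) := by ring
    _ = α₁ * (α₁ + α₂ + 1) / (c * c) := by rw [hk1, hk2]; field_simp; ring

theorem mckay_covariance (α₁ c α₂ : ℝ) (h₁ : 0 < α₁) (hc : 0 < c) (h₂ : 0 < α₂) :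
    (∫ x in Set.Ioi (0 : ℝ), ∫ y in Set.Ioi x, x * y * mckayPDF α₁ c α₂ x y) -
      (∫ x in Set.Ioi (0 : ℝ), ∫ y in Set.Ioi x, x * mckayPDF α₁ c α₂ x y) *
        (∫ x in Set.Ioi (0 : ℝ), ∫ y in Set.Ioi x, y * mckayPDF α₁ c α₂ x y) =
      α₁ / c ^ 2 := by
  rw [mckay_EXY α₁ c α₂ h₁ hc h₂, mckay_EX α₁ c α₂ h₁ hc h₂, mckay_EY α₁ c α₂ h₁ hc h₂]
  field_simp
  ring
end

section
/- For all α₁, c, α₂ > 0, the correlation coefficient of the two coordinates under the McKay density equals √(α₁/(α₁ + α₂)); that is, the covariance of X and Y divided by the product of the standard deviations of X and Y equals √(α₁/(α₁ + α₂)), where X has density c^{α₁} x^{α₁-1} e^{-cx}/Γ(α₁) and Y has density c^{α₁+α₂} y^{α₁+α₂-1} e^{-cy}/Γ(α₁+α₂). In particular, it does not depend on c. -/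
/-- The gamma density with shape `α` and rate `c`. -/
noncomputable def gammaRatePDF (α c : ℝ) (x : ℝ) : ℝ :=
  c ^ α * x ^ (α - 1) * Real.exp (-(c * x)) / Real.Gamma α

open MeasureTheory Set in
lemma mckay_intOn_aux {a b : ℝ} (ha : 0 < a) (hb : 0 < b) :
    IntegrableOn (fun x : ℝ => x ^ (a - 1) * Real.exp (-(b * x))) (Set.Ioi 0) := by
  have := integrableOn_rpow_mul_exp_neg_mul_rpow (p := 1) (s := a - 1) (b := b)
    (by linarith) zero_lt_one hb
  refine this.congr_fun (fun x hx => ?_) measurableSet_Ioi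
  beta_reduce; rw [Real.rpow_one]; ring_nf

open MeasureTheory Set in
lemma mckay_shift_aux (x : ℝ) (f : ℝ → ℝ) :
    ∫ y in Set.Ioi x, f y = ∫ t in Set.Ioi (0:ℝ), f (t + x) := by
  rw [← (MeasureTheory.measurePreserving_add_right volume x).setIntegral_preimage_emb
    (MeasurableEquiv.addRight x).measurableEmbedding f (Set.Ioi x)]
  congr 1
  ext t; simp

open MeasureTheory Set in
lemma mckay_moment_aux (a c p : ℝ) (ha : 0 < a) (hc : 0 < c) (hp : 0 ≤ p) :
    ∫ x in Set.Ioi (0:ℝ), x ^ p * gammaRatePDF a c x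
      = Real.Gamma (a + p) / (Real.Gamma a * c ^ p) := by
  have h1 : ∫ x in Set.Ioi (0:ℝ), x ^ p * gammaRatePDF a c x
      = (c ^ a / Real.Gamma a) * ∫ x in Set.Ioi (0:ℝ), x ^ ((a + p) - 1) * Real.exp (-(c * x)) := by
    rw [← MeasureTheory.integral_const_mul]
    refine setIntegral_congr_fun measurableSet_Ioi (fun x hx => ?_)
    have hx : (0:ℝ) < x := hx
    unfold gammaRatePDF
    rw [show (a + p) - 1 = p + (a - 1) by ring, Real.rpow_add hx]
    field_simp
  rw [h1, Real.integral_rpow_mul_exp_neg_mul_Ioi (by linarith) hc]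
  rw [Real.div_rpow zero_le_one hc.le, Real.one_rpow, Real.rpow_add hc]
  have hg := Real.Gamma_pos_of_pos ha
  have h2 : (c:ℝ) ^ a ≠ 0 := (Real.rpow_pos_of_pos hc a).ne'
  have h3 : (c:ℝ) ^ p ≠ 0 := (Real.rpow_pos_of_pos hc p).ne'
  field_simp

open MeasureTheory Set in
lemma mckay_mean_eq (a c : ℝ) (ha : 0 < a) (hc : 0 < c) :
    ∫ x in Set.Ioi (0:ℝ), x * gammaRatePDF a c x = a / c := by
  have : ∫ x in Set.Ioi (0:ℝ), x * gammaRatePDF a c x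
      = ∫ x in Set.Ioi (0:ℝ), x ^ (1:ℝ) * gammaRatePDF a c x := by
    refine setIntegral_congr_fun measurableSet_Ioi (fun x hx => ?_)
    rw [Real.rpow_one]
  rw [this, mckay_moment_aux a c 1 ha hc zero_le_one, Real.rpow_one,
    Real.Gamma_add_one ha.ne']
  have hg := Real.Gamma_pos_of_pos ha
  field_simp

open MeasureTheory Set in
lemma mckay_sq_moment_eq (a c : ℝ) (ha : 0 < a) (hc : 0 < c) :
    ∫ x in Set.Ioi (0:ℝ), x ^ 2 * gammaRatePDF a c x = a * (a + 1) / c ^ 2 := by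
  have : ∫ x in Set.Ioi (0:ℝ), x ^ 2 * gammaRatePDF a c x
      = ∫ x in Set.Ioi (0:ℝ), x ^ (2:ℝ) * gammaRatePDF a c x := by
    refine setIntegral_congr_fun measurableSet_Ioi (fun x hx => ?_)
    rw [Real.rpow_two]
  rw [this, mckay_moment_aux a c 2 ha hc (by norm_num), Real.rpow_two,
    show a + 2 = (a + 1) + 1 by ring, Real.Gamma_add_one (by linarith),
    Real.Gamma_add_one ha.ne']
  have hg := Real.Gamma_pos_of_pos ha
  field_simp

open MeasureTheory Set in
lemma mckay_double_int (α₁ c α₂ : ℝ) (h₁ : 0 < α₁) (hc : 0 < c) (h₂ : 0 < α₂) :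
    ∫ x in Set.Ioi (0:ℝ), ∫ y in Set.Ioi x, x * y * mckayPDF α₁ c α₂ x y
      = α₁ * (α₁ + α₂ + 1) / c ^ 2 := by
  have hg1 := Real.Gamma_pos_of_pos h₁
  have hg2 := Real.Gamma_pos_of_pos h₂
  set G := Real.Gamma α₁ * Real.Gamma α₂ with hG
  have hGpos : 0 < G := mul_pos hg1 hg2
  have inner : ∀ x : ℝ, 0 < x →
      (∫ y in Set.Ioi x, x * y * mckayPDF α₁ c α₂ x y)
        = (c ^ (α₁ + α₂) * x ^ (α₁ - 1) * Real.exp (-(c * x)) * x / G) *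
            ((1/c) ^ (α₂ + 1) * Real.Gamma (α₂ + 1)) +
          (c ^ (α₁ + α₂) * x ^ (α₁ - 1) * Real.exp (-(c * x)) * x ^ (2:ℝ) / G) *
            ((1/c) ^ α₂ * Real.Gamma α₂) := by
    intro x hx
    rw [mckay_shift_aux]
    set B₁ := c ^ (α₁ + α₂) * x ^ (α₁ - 1) * Real.exp (-(c * x)) * x / G with hB₁
    set B₂ := c ^ (α₁ + α₂) * x ^ (α₁ - 1) * Real.exp (-(c * x)) * x ^ (2:ℝ) / G with hB₂
    have step : ∫ t in Set.Ioi (0:ℝ), x * (t + x) * mckayPDF α₁ c α₂ x (t + x)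
        = ∫ t in Set.Ioi (0:ℝ),
            (B₁ * (t ^ ((α₂ + 1) - 1) * Real.exp (-(c * t))) +
             B₂ * (t ^ (α₂ - 1) * Real.exp (-(c * t)))) := by
      refine setIntegral_congr_fun measurableSet_Ioi (fun t ht => ?_)
      have ht : (0:ℝ) < t := ht
      unfold mckayPDF
      rw [show t + x - x = t by ring, show -(c * (t + x)) = -(c*t) + -(c*x) by ring,
        Real.exp_add, show (α₂ + 1) - 1 = (α₂ - 1) + 1 by ring, Real.rpow_add ht,
        Real.rpow_one, hB₁, hB₂, Real.rpow_two]
      field_simp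
      ring
    rw [step, MeasureTheory.integral_add ((mckay_intOn_aux (by linarith) hc).const_mul B₁)
      ((mckay_intOn_aux h₂ hc).const_mul B₂), MeasureTheory.integral_const_mul,
      MeasureTheory.integral_const_mul,
      Real.integral_rpow_mul_exp_neg_mul_Ioi (by linarith) hc,
      Real.integral_rpow_mul_exp_neg_mul_Ioi h₂ hc]
  set D₁ := c ^ (α₁ + α₂) * (1/c) ^ (α₂ + 1) * Real.Gamma (α₂ + 1) / G with hD₁
  set D₂ := c ^ (α₁ + α₂) * (1/c) ^ α₂ * Real.Gamma α₂ / G with hD₂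
  have outer : ∫ x in Set.Ioi (0:ℝ), ∫ y in Set.Ioi x, x * y * mckayPDF α₁ c α₂ x y
      = ∫ x in Set.Ioi (0:ℝ),
          (D₁ * (x ^ ((α₁ + 1) - 1) * Real.exp (-(c * x))) +
           D₂ * (x ^ ((α₁ + 2) - 1) * Real.exp (-(c * x)))) := by
    refine setIntegral_congr_fun measurableSet_Ioi (fun x hx => ?_)
    have hx : (0:ℝ) < x := hx
    rw [inner x hx, hD₁, hD₂,
      show (α₁ + 1) - 1 = (α₁ - 1) + 1 by ring, Real.rpow_add hx, Real.rpow_one,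
      show (α₁ + 2) - 1 = (α₁ - 1) + 2 by ring, Real.rpow_add hx]
    field_simp
  rw [outer, MeasureTheory.integral_add ((mckay_intOn_aux (by linarith) hc).const_mul D₁)
      ((mckay_intOn_aux (by linarith) hc).const_mul D₂), MeasureTheory.integral_const_mul,
      MeasureTheory.integral_const_mul,
      Real.integral_rpow_mul_exp_neg_mul_Ioi (by linarith) hc,
      Real.integral_rpow_mul_exp_neg_mul_Ioi (by linarith) hc, hD₁, hD₂]
  have hc1 : (0:ℝ) < 1/c := by positivity
  have key : ∀ s t : ℝ, s + t = α₁ + α₂ + 2 →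
      c ^ (α₁ + α₂) * ((1/c) ^ s * (1/c) ^ t) = 1 / c ^ 2 := by
    intro s t hst
    rw [← Real.rpow_add hc1, hst, show α₁ + α₂ + 2 = (α₁ + α₂) + (2:ℝ) by ring,
      Real.rpow_add hc1, ← mul_assoc, ← Real.mul_rpow hc.le hc1.le,
      mul_one_div_cancel hc.ne', Real.one_rpow, one_mul, Real.rpow_two]
    field_simp
  have e1 : c ^ (α₁ + α₂) * (1/c) ^ (α₂ + 1) * Real.Gamma (α₂ + 1) / G *
        ((1/c) ^ (α₁ + 1) * Real.Gamma (α₁ + 1))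
      = (c ^ (α₁ + α₂) * ((1/c) ^ (α₂ + 1) * (1/c) ^ (α₁ + 1))) *
        (Real.Gamma (α₂ + 1) * Real.Gamma (α₁ + 1) / G) := by ring
  have e2 : c ^ (α₁ + α₂) * (1/c) ^ α₂ * Real.Gamma α₂ / G *
        ((1/c) ^ (α₁ + 2) * Real.Gamma (α₁ + 2))
      = (c ^ (α₁ + α₂) * ((1/c) ^ α₂ * (1/c) ^ (α₁ + 2))) *
        (Real.Gamma α₂ * Real.Gamma (α₁ + 2) / G) := by ring
  rw [e1, e2, key _ _ (by ring), key _ _ (by ring),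
    Real.Gamma_add_one h₂.ne', Real.Gamma_add_one h₁.ne',
    show α₁ + 2 = (α₁ + 1) + 1 by ring, Real.Gamma_add_one (by linarith),
    Real.Gamma_add_one h₁.ne', hG]
  field_simp
  ring

theorem mckay_correlation (α₁ c α₂ : ℝ) (h₁ : 0 < α₁) (hc : 0 < c) (h₂ : 0 < α₂) :
    ((∫ x in Set.Ioi (0 : ℝ), ∫ y in Set.Ioi x, x * y * mckayPDF α₁ c α₂ x y) -
        (∫ x in Set.Ioi (0 : ℝ), x * gammaRatePDF α₁ c x) *
          (∫ y in Set.Ioi (0 : ℝ), y * gammaRatePDF (α₁ + α₂) c y)) /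
      (Real.sqrt ((∫ x in Set.Ioi (0 : ℝ), x ^ 2 * gammaRatePDF α₁ c x) -
          (∫ x in Set.Ioi (0 : ℝ), x * gammaRatePDF α₁ c x) ^ 2) *
        Real.sqrt ((∫ y in Set.Ioi (0 : ℝ), y ^ 2 * gammaRatePDF (α₁ + α₂) c y) -
          (∫ y in Set.Ioi (0 : ℝ), y * gammaRatePDF (α₁ + α₂) c y) ^ 2)) =
      Real.sqrt (α₁ / (α₁ + α₂)) := by
  have hs : 0 < α₁ + α₂ := by linarith
  rw [mckay_double_int α₁ c α₂ h₁ hc h₂, mckay_mean_eq α₁ c h₁ hc,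
    mckay_mean_eq (α₁ + α₂) c hs hc, mckay_sq_moment_eq α₁ c h₁ hc,
    mckay_sq_moment_eq (α₁ + α₂) c hs hc]
  have v1 : α₁ * (α₁ + 1) / c ^ 2 - (α₁ / c) ^ 2 = α₁ / c ^ 2 := by
    field_simp; ring
  have v2 : (α₁ + α₂) * (α₁ + α₂ + 1) / c ^ 2 - ((α₁ + α₂) / c) ^ 2
      = (α₁ + α₂) / c ^ 2 := by field_simp; ring
  have vn : α₁ * (α₁ + α₂ + 1) / c ^ 2 - α₁ / c * ((α₁ + α₂) / c) = α₁ / c ^ 2 := by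
    field_simp; ring
  rw [v1, v2, vn, Real.sqrt_div h₁.le, Real.sqrt_div hs.le,
    Real.sqrt_div h₁.le, Real.sqrt_sq hc.le]
  have hq1 : 0 < Real.sqrt α₁ := Real.sqrt_pos.mpr h₁
  have hq2 : 0 < Real.sqrt (α₁ + α₂) := Real.sqrt_pos.mpr hs
  rw [div_mul_div_comm]
  field_simp
  linear_combination (-1) * Real.mul_self_sqrt h₁.le
end

section
/- For all α₁, c, α₂ > 0, the Fisher information matrix of the McKay family in the coordinates (α₁, c, α₂) has entries g₁₁ = ψ'(α₁), g₁₂ = g₂₁ = -1/c, g₁₃ = g₃₁ = 0, g₂₂ = (α₁ + α₂)/c², g₂₃ = g₃₂ = -1/c, g₃₃ = ψ'(α₂), where gᵢⱼ = ∫₀^∞ ∫ₓ^∞ (∂ᵢ log m(x, y)) (∂ⱼ log m(x, y)) m(x, y) dy dx and ∂₁, ∂₂, ∂₃ denote partial derivatives with respect to α₁, c, α₂ respectively. -/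
open MeasureTheory Set Filter Real



lemma mk_abs_log_le {δ t : ℝ} (hδ : 0 < δ) (ht : 0 < t) :
    |Real.log t| ≤ (t ^ δ + t ^ (-δ)) / δ := by
  have h1 : (0:ℝ) ≤ t ^ δ := Real.rpow_nonneg ht.le δ
  have h2 : (0:ℝ) ≤ t ^ (-δ) := Real.rpow_nonneg ht.le (-δ)
  rcases le_or_gt 1 t with h | h
  · rw [abs_of_nonneg (Real.log_nonneg h)]
    calc Real.log t ≤ t ^ δ / δ := Real.log_le_rpow_div ht.le hδ
      _ ≤ (t ^ δ + t ^ (-δ)) / δ := by gcongr; linarith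
  · rw [abs_of_neg (Real.log_neg ht h), ← Real.log_inv]
    calc Real.log t⁻¹ ≤ (t⁻¹) ^ δ / δ := Real.log_le_rpow_div (inv_nonneg.mpr ht.le) hδ
      _ = t ^ (-δ) / δ := by rw [Real.inv_rpow ht.le, ← Real.rpow_neg ht.le]
      _ ≤ (t ^ δ + t ^ (-δ)) / δ := by gcongr; linarith

lemma mk_int_gamma {p c : ℝ} (hp : 0 < p) (hc : 0 < c) :
    IntegrableOn (fun t : ℝ => t ^ (p - 1) * Real.exp (-(c * t))) (Ioi 0) := by
  have h0 := Real.GammaIntegral_convergent hp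
  have h1 : IntegrableOn (fun x : ℝ => Real.exp (-(c * x)) * (c * x) ^ (p - 1)) (Ioi 0) := by
    have := (integrableOn_Ioi_comp_mul_left_iff
      (fun x : ℝ => Real.exp (-x) * x ^ (p - 1)) 0 hc).mpr
    rw [mul_zero] at this
    exact this h0
  have h2 := (h1.const_mul ((c ^ (p - 1))⁻¹) : IntegrableOn _ _ _)
  refine IntegrableOn.congr_fun h2 (fun x hx => ?_) measurableSet_Ioi
  have hcp : (0:ℝ) < c ^ (p - 1) := Real.rpow_pos_of_pos hc _
  rw [Real.mul_rpow hc.le (le_of_lt hx)]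
  field_simp

lemma mk_max_pow_le {a b : ℝ} (ha : 0 ≤ a) (hb : 0 ≤ b) (k : ℕ) :
    (max a b) ^ k ≤ a ^ k + b ^ k := by
  rcases le_total a b with h | h
  · rw [max_eq_right h]
    have : (0:ℝ) ≤ a ^ k := pow_nonneg ha k
    linarith
  · rw [max_eq_left h]
    have : (0:ℝ) ≤ b ^ k := pow_nonneg hb k
    linarith

lemma mk_int_gamma_abslog {p c : ℝ} (hp : 0 < p) (hc : 0 < c) (k : ℕ) :
    IntegrableOn (fun t : ℝ => t ^ (p - 1) * Real.exp (-(c * t)) * |Real.log t| ^ k)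
      (Ioi 0) := by
  set δ : ℝ := p / (2 * (k + 1)) with hδdef
  have hδ : 0 < δ := by positivity
  have hkd : (k : ℝ) * δ < p := by
    rw [hδdef, mul_div_assoc', div_lt_iff₀ (by positivity)]
    nlinarith [hp, Nat.cast_nonneg (α := ℝ) k]
  have hq1 : 0 < p + k * δ := by positivity
  have hq2 : 0 < p - k * δ := by linarith
  have hb1 : IntegrableOn (fun t : ℝ =>
      (2 / δ) ^ k * (t ^ (p + k * δ - 1) * Real.exp (-(c * t))
        + t ^ (p - k * δ - 1) * Real.exp (-(c * t)))) (Ioi 0) :=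
    ((mk_int_gamma hq1 hc).add (mk_int_gamma hq2 hc)).const_mul _
  have hmeas : AEStronglyMeasurable
      (fun t : ℝ => t ^ (p - 1) * Real.exp (-(c * t)) * |Real.log t| ^ k)
      (volume.restrict (Ioi 0)) := by
    have m1 : Measurable fun t : ℝ => t ^ (p - 1) := by fun_prop
    have m2 : Measurable fun t : ℝ => Real.exp (-(c * t)) :=
      Real.measurable_exp.comp ((measurable_id.const_mul c).neg)
    have m3 : Measurable fun t : ℝ => |Real.log t| ^ k := Real.measurable_log.abs.pow_const k
    exact ((m1.mul m2).mul m3).aestronglyMeasurable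
  refine Integrable.mono' hb1 hmeas ?_
  filter_upwards [self_mem_ae_restrict measurableSet_Ioi] with t ht
  have ht0 : (0:ℝ) < t := ht
  have hnn : (0:ℝ) ≤ t ^ (p - 1) * Real.exp (-(c * t)) * |Real.log t| ^ k := by positivity
  rw [Real.norm_eq_abs, abs_of_nonneg hnn]
  have hpowd : (t ^ δ) ^ (k:ℕ) = t ^ ((k:ℝ) * δ) := by
    rw [← Real.rpow_natCast (t ^ δ) k, ← Real.rpow_mul ht0.le, mul_comm]
  have hpowd' : (t ^ (-δ)) ^ (k:ℕ) = t ^ (-((k:ℝ) * δ)) := by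
    rw [← Real.rpow_natCast (t ^ (-δ)) k, ← Real.rpow_mul ht0.le]
    ring_nf
  have hlog : |Real.log t| ^ k ≤ (2 / δ) ^ k * (t ^ ((k:ℝ) * δ) + t ^ (-((k:ℝ) * δ))) := by
    have hmx0 : (0:ℝ) ≤ max (t ^ δ) (t ^ (-δ)) := le_max_of_le_left (Real.rpow_nonneg ht0.le _)
    calc |Real.log t| ^ k ≤ ((t ^ δ + t ^ (-δ)) / δ) ^ k :=
          pow_le_pow_left₀ (abs_nonneg _) (mk_abs_log_le hδ ht0) k
      _ ≤ ((2 * max (t ^ δ) (t ^ (-δ))) / δ) ^ k := by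
          apply pow_le_pow_left₀ (by positivity)
          have h1 := le_max_left (t ^ δ) (t ^ (-δ))
          have h2 := le_max_right (t ^ δ) (t ^ (-δ))
          gcongr
          linarith
      _ = (2 / δ) ^ k * (max (t ^ δ) (t ^ (-δ))) ^ k := by
          rw [← mul_pow]; congr 1; ring
      _ ≤ (2 / δ) ^ k * (t ^ ((k:ℝ) * δ) + t ^ (-((k:ℝ) * δ))) := by
          gcongr
          calc (max (t ^ δ) (t ^ (-δ))) ^ k
              ≤ (t ^ δ) ^ k + (t ^ (-δ)) ^ k :=
                mk_max_pow_le (Real.rpow_nonneg ht0.le _) (Real.rpow_nonneg ht0.le _) k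
            _ = t ^ ((k:ℝ) * δ) + t ^ (-((k:ℝ) * δ)) := by rw [hpowd, hpowd']
  calc t ^ (p - 1) * Real.exp (-(c * t)) * |Real.log t| ^ k
      ≤ t ^ (p - 1) * Real.exp (-(c * t)) *
        ((2 / δ) ^ k * (t ^ ((k:ℝ) * δ) + t ^ (-((k:ℝ) * δ)))) := by
        have : (0:ℝ) ≤ t ^ (p - 1) * Real.exp (-(c * t)) := by positivity
        exact mul_le_mul_of_nonneg_left hlog this
    _ = (2 / δ) ^ k * (t ^ (p + k * δ - 1) * Real.exp (-(c * t))
        + t ^ (p - k * δ - 1) * Real.exp (-(c * t))) := by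
        have e1 : t ^ (p - 1) * t ^ ((k:ℝ) * δ) = t ^ (p + k * δ - 1) := by
          rw [← Real.rpow_add ht0]; ring_nf
        have e2 : t ^ (p - 1) * t ^ (-((k:ℝ) * δ)) = t ^ (p - k * δ - 1) := by
          rw [← Real.rpow_add ht0]; ring_nf
        rw [← e1, ← e2]; ring

lemma mk_int_gamma_logpow {p c : ℝ} (hp : 0 < p) (hc : 0 < c) (k : ℕ) :
    IntegrableOn (fun t : ℝ => t ^ (p - 1) * Real.exp (-(c * t)) * (Real.log t) ^ k)
      (Ioi 0) := by
  refine Integrable.mono' (mk_int_gamma_abslog hp hc k) ?_ ?_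
  · have m1 : Measurable fun t : ℝ => t ^ (p - 1) := by fun_prop
    have m2 : Measurable fun t : ℝ => Real.exp (-(c * t)) :=
      Real.measurable_exp.comp ((measurable_id.const_mul c).neg)
    have m3 : Measurable fun t : ℝ => (Real.log t) ^ k := Real.measurable_log.pow_const k
    exact ((m1.mul m2).mul m3).aestronglyMeasurable
  · filter_upwards [self_mem_ae_restrict measurableSet_Ioi] with t ht
    have ht0 : (0:ℝ) < t := ht
    rw [Real.norm_eq_abs, abs_mul, abs_mul, abs_pow]
    rw [abs_of_nonneg (Real.rpow_nonneg ht0.le _), abs_of_nonneg (Real.exp_pos _).le]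

noncomputable def mkPhi (k : ℕ) (c a : ℝ) : ℝ :=
  ∫ t in Ioi (0:ℝ), t ^ (a - 1) * Real.exp (-(c * t)) * (Real.log t) ^ k

lemma mkPhi_meas (k : ℕ) (c s : ℝ) :
    AEStronglyMeasurable (fun t : ℝ => t ^ (s - 1) * Real.exp (-(c * t)) * (Real.log t) ^ k)
      (volume.restrict (Ioi 0)) := by
  have m1 : Measurable fun t : ℝ => t ^ (s - 1) := by fun_prop
  have m2 : Measurable fun t : ℝ => Real.exp (-(c * t)) :=
    Real.measurable_exp.comp ((measurable_id.const_mul c).neg)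
  have m3 : Measurable fun t : ℝ => (Real.log t) ^ k := Real.measurable_log.pow_const k
  exact ((m1.mul m2).mul m3).aestronglyMeasurable

lemma mk_hasDerivAt_phi (k : ℕ) {a c : ℝ} (ha : 0 < a) (hc : 0 < c) :
    HasDerivAt (fun s => mkPhi k c s) (mkPhi (k + 1) c a) a := by
  have h2 : (0:ℝ) < a / 2 := half_pos ha
  have h32 : (0:ℝ) < 3 * a / 2 := by linarith
  have key := hasDerivAt_integral_of_dominated_loc_of_deriv_le (μ := volume.restrict (Ioi 0))
    (F := fun s t => t ^ (s - 1) * Real.exp (-(c * t)) * (Real.log t) ^ k)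
    (F' := fun s t => t ^ (s - 1) * Real.exp (-(c * t)) * (Real.log t) ^ (k + 1))
    (x₀ := a)
    (bound := fun t => (t ^ (a / 2 - 1) + t ^ (3 * a / 2 - 1)) * Real.exp (-(c * t))
      * |Real.log t| ^ (k + 1))
    (Metric.ball_mem_nhds a h2)
    (Eventually.of_forall fun s => mkPhi_meas k c s)
    (mk_int_gamma_logpow ha hc k)
    (mkPhi_meas (k + 1) c a)
    ?_ ?_ ?_
  · exact key.2
  · -- bound
    filter_upwards [self_mem_ae_restrict measurableSet_Ioi] with t ht
    intro s hs
    have ht0 : (0:ℝ) < t := ht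
    rw [Metric.mem_ball, Real.dist_eq] at hs
    have hsl : a / 2 < s := by cases' abs_lt.mp hs with h1 h2'; linarith
    have hsu : s < 3 * a / 2 := by cases' abs_lt.mp hs with h1 h2'; linarith
    have hpow : t ^ (s - 1) ≤ t ^ (a / 2 - 1) + t ^ (3 * a / 2 - 1) := by
      rcases le_or_gt t 1 with h | h
      · have := Real.rpow_le_rpow_of_exponent_ge ht0 h (by linarith : a / 2 - 1 ≤ s - 1)
        have h2n : (0:ℝ) ≤ t ^ (3 * a / 2 - 1) := Real.rpow_nonneg ht0.le _
        linarith
      · have := Real.rpow_le_rpow_of_exponent_le h.le (by linarith : s - 1 ≤ 3 * a / 2 - 1)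
        have h2n : (0:ℝ) ≤ t ^ (a / 2 - 1) := Real.rpow_nonneg ht0.le _
        linarith
    have : ‖t ^ (s - 1) * Real.exp (-(c * t)) * Real.log t ^ (k + 1)‖
        = t ^ (s - 1) * Real.exp (-(c * t)) * |Real.log t| ^ (k + 1) := by
      rw [Real.norm_eq_abs, abs_mul, abs_mul, abs_pow,
        abs_of_nonneg (Real.rpow_nonneg ht0.le _), abs_of_nonneg (Real.exp_pos _).le]
    rw [this]
    have hnn : (0:ℝ) ≤ Real.exp (-(c * t)) * |Real.log t| ^ (k + 1) := by positivity
    calc t ^ (s - 1) * Real.exp (-(c * t)) * |Real.log t| ^ (k + 1)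
        = t ^ (s - 1) * (Real.exp (-(c * t)) * |Real.log t| ^ (k + 1)) := by ring
      _ ≤ (t ^ (a / 2 - 1) + t ^ (3 * a / 2 - 1))
            * (Real.exp (-(c * t)) * |Real.log t| ^ (k + 1)) :=
          mul_le_mul_of_nonneg_right hpow hnn
      _ = (t ^ (a / 2 - 1) + t ^ (3 * a / 2 - 1)) * Real.exp (-(c * t))
            * |Real.log t| ^ (k + 1) := by ring
  · -- bound integrable
    have := (mk_int_gamma_abslog h2 hc (k + 1)).add (mk_int_gamma_abslog h32 hc (k + 1))
    refine this.congr (ae_of_all _ fun t => by simp only [Pi.add_apply]; ring)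
  · -- differentiability
    filter_upwards [self_mem_ae_restrict measurableSet_Ioi] with t ht
    intro s hs
    have ht0 : (0:ℝ) < t := ht
    have hrw : ∀ u : ℝ, t ^ (u - 1) * Real.exp (-(c * t)) * (Real.log t) ^ k
        = Real.exp (Real.log t * (u - 1)) * (Real.exp (-(c * t)) * (Real.log t) ^ k) := by
      intro u
      rw [← Real.rpow_def_of_pos ht0]
      ring
    have hd : HasDerivAt (fun u : ℝ => Real.exp (Real.log t * (u - 1)))
        (Real.exp (Real.log t * (s - 1)) * Real.log t) s := by
      have h := (((hasDerivAt_id s).sub_const 1).const_mul (Real.log t)).exp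
      simpa using h
    have hd2 := hd.mul_const (Real.exp (-(c * t)) * (Real.log t) ^ k)
    have : HasDerivAt (fun u : ℝ => t ^ (u - 1) * Real.exp (-(c * t)) * (Real.log t) ^ k)
        (Real.exp (Real.log t * (s - 1)) * Real.log t
          * (Real.exp (-(c * t)) * (Real.log t) ^ k)) s := by
      simp only [hrw]
      exact hd2
    refine this.congr_deriv ?_
    rw [← Real.rpow_def_of_pos ht0]
    ring

lemma mk_phi0 {a c : ℝ} (ha : 0 < a) (hc : 0 < c) : mkPhi 0 c a = Real.Gamma a / c ^ a := by
  unfold mkPhi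
  simp only [pow_zero, mul_one]
  rw [integral_rpow_mul_exp_neg_mul_Ioi ha hc, Real.div_rpow zero_le_one hc.le, Real.one_rpow]
  ring

lemma mk_hasDerivAt_Gamma {a : ℝ} (ha : 0 < a) : HasDerivAt Real.Gamma (mkPhi 1 1 a) a := by
  refine (mk_hasDerivAt_phi 0 ha one_pos).congr_of_eventuallyEq ?_
  filter_upwards [Ioi_mem_nhds ha] with x hx
  rw [Real.Gamma_eq_integral hx]
  unfold mkPhi
  refine setIntegral_congr_fun measurableSet_Ioi fun t ht => ?_
  simp only [pow_zero, mul_one, one_mul]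
  ring

lemma mk_deriv_Gamma {a : ℝ} (ha : 0 < a) : deriv Real.Gamma a = mkPhi 1 1 a :=
  (mk_hasDerivAt_Gamma ha).deriv

lemma mk_phi1_one {a : ℝ} (ha : 0 < a) : mkPhi 1 1 a = digamma a * Real.Gamma a := by
  have hne : Real.Gamma a ≠ 0 := (Real.Gamma_pos_of_pos ha).ne'
  rw [digamma, mk_deriv_Gamma ha]
  field_simp

lemma mk_hasDerivAt_digamma_aux {a : ℝ} (ha : 0 < a) :
    HasDerivAt digamma
      ((mkPhi 2 1 a * Real.Gamma a - mkPhi 1 1 a * mkPhi 1 1 a) / Real.Gamma a ^ 2) a := by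
  have hne : Real.Gamma a ≠ 0 := (Real.Gamma_pos_of_pos ha).ne'
  have hd := (mk_hasDerivAt_phi 1 ha one_pos).div (mk_hasDerivAt_Gamma ha) hne
  refine hd.congr_of_eventuallyEq ?_
  filter_upwards [Ioi_mem_nhds ha] with x hx
  rw [digamma, mk_deriv_Gamma hx]
  rfl

lemma mk_trigamma_eq {a : ℝ} (ha : 0 < a) :
    trigamma a = (mkPhi 2 1 a * Real.Gamma a - mkPhi 1 1 a * mkPhi 1 1 a) / Real.Gamma a ^ 2 := by
  rw [trigamma]
  exact (mk_hasDerivAt_digamma_aux ha).deriv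

lemma mk_hasDerivAt_digamma {a : ℝ} (ha : 0 < a) : HasDerivAt digamma (trigamma a) a := by
  rw [mk_trigamma_eq ha]
  exact mk_hasDerivAt_digamma_aux ha

lemma mk_phi2_one {a : ℝ} (ha : 0 < a) :
    mkPhi 2 1 a = Real.Gamma a * (trigamma a + digamma a ^ 2) := by
  have hne : Real.Gamma a ≠ 0 := (Real.Gamma_pos_of_pos ha).ne'
  rw [mk_trigamma_eq ha, mk_phi1_one ha]
  field_simp
  ring

lemma mk_hasDerivAt_GE {a c : ℝ} (ha : 0 < a) (hc : 0 < c) :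
    HasDerivAt (fun x => Real.Gamma x / c ^ x)
      (Real.Gamma a / c ^ a * (digamma a - Real.log c)) a := by
  have hE : ∀ x : ℝ, Real.Gamma x / c ^ x
      = Real.Gamma x * Real.exp (-(x * Real.log c)) := by
    intro x
    rw [Real.rpow_def_of_pos hc, Real.exp_neg, mul_comm (Real.log c) x]
    ring
  have hdE : HasDerivAt (fun x : ℝ => Real.exp (-(x * Real.log c)))
      (Real.exp (-(a * Real.log c)) * (-Real.log c)) a := by
    have h := (((hasDerivAt_id a).mul_const (Real.log c)).neg).exp
    simpa using h
  have hd := (mk_hasDerivAt_Gamma ha).mul hdE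
  simp only [hE]
  refine hd.congr_deriv ?_
  have he : Real.exp (-(a * Real.log c)) = (c ^ a)⁻¹ := by
    rw [Real.exp_neg, Real.rpow_def_of_pos hc, mul_comm]
  rw [mk_phi1_one ha, he]
  have hcp : c ^ a ≠ 0 := (Real.rpow_pos_of_pos hc a).ne'
  field_simp
  ring

lemma mk_phi1_c {a c : ℝ} (ha : 0 < a) (hc : 0 < c) :
    mkPhi 1 c a = Real.Gamma a / c ^ a * (digamma a - Real.log c) := by
  refine (mk_hasDerivAt_phi 0 ha hc).unique ?_
  refine (mk_hasDerivAt_GE ha hc).congr_of_eventuallyEq ?_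
  filter_upwards [Ioi_mem_nhds ha] with x hx
  exact mk_phi0 hx hc

lemma mk_phi2_c {a c : ℝ} (ha : 0 < a) (hc : 0 < c) :
    mkPhi 2 c a = Real.Gamma a / c ^ a * ((digamma a - Real.log c) ^ 2 + trigamma a) := by
  refine (mk_hasDerivAt_phi 1 ha hc).unique ?_
  have h2 : HasDerivAt (fun x => Real.Gamma x / c ^ x * (digamma x - Real.log c))
      (Real.Gamma a / c ^ a * ((digamma a - Real.log c) ^ 2 + trigamma a)) a := by
    have h := (mk_hasDerivAt_GE ha hc).mul ((mk_hasDerivAt_digamma ha).sub_const (Real.log c))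
    refine h.congr_deriv ?_
    ring
  refine h2.congr_of_eventuallyEq ?_
  filter_upwards [Ioi_mem_nhds ha] with x hx
  exact mk_phi1_c hx hc

lemma mk_digamma_add_one {a : ℝ} (ha : 0 < a) : digamma (a + 1) = digamma a + 1 / a := by
  have ha1 : (0:ℝ) < a + 1 := by linarith
  have hne : Real.Gamma a ≠ 0 := (Real.Gamma_pos_of_pos ha).ne'
  have h1 : HasDerivAt (fun x : ℝ => Real.Gamma (x + 1))
      (digamma (a + 1) * Real.Gamma (a + 1)) a := by
    have h := (mk_hasDerivAt_Gamma ha1).comp a ((hasDerivAt_id a).add_const 1)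
    rw [mk_phi1_one ha1] at h
    exact h.congr_deriv (by simp)
  have h2 : HasDerivAt (fun x : ℝ => x * Real.Gamma x)
      (Real.Gamma a + a * (digamma a * Real.Gamma a)) a := by
    have h := (hasDerivAt_id a).mul (mk_hasDerivAt_Gamma ha)
    rw [mk_phi1_one ha] at h
    exact h.congr_deriv (by simp)
  have h3 : HasDerivAt (fun x : ℝ => Real.Gamma (x + 1))
      (Real.Gamma a + a * (digamma a * Real.Gamma a)) a := by
    refine h2.congr_of_eventuallyEq ?_
    filter_upwards [Ioi_mem_nhds ha] with x hx
    exact Real.Gamma_add_one (ne_of_gt hx)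
  have key := h1.unique h3
  rw [Real.Gamma_add_one ha.ne'] at key
  have key2 : (digamma (a + 1) * a) * Real.Gamma a = (digamma a * a + 1) * Real.Gamma a := by
    linear_combination key
  have key3 := mul_right_cancel₀ hne key2
  field_simp
  linarith [key3]

/-- The gamma density with shape `a` and rate `c`. -/
noncomputable def mkg (a c t : ℝ) : ℝ :=
  c ^ a * t ^ (a - 1) * Real.exp (-(c * t)) / Real.Gamma a

lemma mk_g_eq (j k : ℕ) {a c : ℝ} (hc : 0 < c) {t : ℝ} (ht : t ∈ Ioi (0:ℝ)) :
    t ^ j * (Real.log t) ^ k * mkg a c t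
      = c ^ a / Real.Gamma a * (t ^ (a + j - 1) * Real.exp (-(c * t)) * (Real.log t) ^ k) := by
  have ht0 : (0:ℝ) < t := ht
  have h1 : t ^ (a + (j:ℝ) - 1) = t ^ (j:ℕ) * t ^ (a - 1) := by
    rw [← Real.rpow_natCast t j, ← Real.rpow_add ht0]
    ring_nf
  rw [mkg, show a + (j:ℕ) - 1 = a + (j:ℝ) - 1 from by norm_num, h1]
  ring

lemma mk_g_integrable (j k : ℕ) {a c : ℝ} (ha : 0 < a) (hc : 0 < c) :
    IntegrableOn (fun t : ℝ => t ^ j * (Real.log t) ^ k * mkg a c t) (Ioi 0) := by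
  have hp : (0:ℝ) < a + j := by positivity
  have h := (mk_int_gamma_logpow hp hc k).const_mul (c ^ a / Real.Gamma a)
  exact IntegrableOn.congr_fun h (fun t ht => (mk_g_eq j k hc ht).symm) measurableSet_Ioi

lemma mk_g_integral (j k : ℕ) {a c : ℝ} (ha : 0 < a) (hc : 0 < c) :
    ∫ t in Ioi (0:ℝ), t ^ j * (Real.log t) ^ k * mkg a c t
      = c ^ a / Real.Gamma a * mkPhi k c (a + j) := by
  rw [setIntegral_congr_fun measurableSet_Ioi (fun t ht => mk_g_eq j k hc (t := t) ht)]
  rw [mkPhi, integral_const_mul]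

lemma mk_cpow_aux {c : ℝ} (hc : 0 < c) (a : ℝ) :
    c ^ (a + 1) = c ^ a * c ∧ c ^ (a + 2) = c ^ a * (c * c) := by
  constructor
  · rw [Real.rpow_add hc, Real.rpow_one]
  · rw [Real.rpow_add hc]
    congr 1
    rw [show (2:ℝ) = ((2:ℕ):ℝ) by norm_num, Real.rpow_natCast]
    ring

lemma mk_B00 {a c : ℝ} (ha : 0 < a) (hc : 0 < c) :
    ∫ t in Ioi (0:ℝ), t ^ 0 * (Real.log t) ^ 0 * mkg a c t = 1 := by
  rw [mk_g_integral 0 0 ha hc]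
  have : a + (0:ℕ) = a := by norm_num
  rw [this, mk_phi0 ha hc]
  have h1 : Real.Gamma a ≠ 0 := (Real.Gamma_pos_of_pos ha).ne'
  have h2 : c ^ a ≠ 0 := (Real.rpow_pos_of_pos hc a).ne'
  field_simp

lemma mk_B01 {a c : ℝ} (ha : 0 < a) (hc : 0 < c) :
    ∫ t in Ioi (0:ℝ), t ^ 0 * (Real.log t) ^ 1 * mkg a c t = digamma a - Real.log c := by
  rw [mk_g_integral 0 1 ha hc]
  have : a + (0:ℕ) = a := by norm_num
  rw [this, mk_phi1_c ha hc]
  have h1 : Real.Gamma a ≠ 0 := (Real.Gamma_pos_of_pos ha).ne'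
  have h2 : c ^ a ≠ 0 := (Real.rpow_pos_of_pos hc a).ne'
  field_simp

lemma mk_B02 {a c : ℝ} (ha : 0 < a) (hc : 0 < c) :
    ∫ t in Ioi (0:ℝ), t ^ 0 * (Real.log t) ^ 2 * mkg a c t
      = (digamma a - Real.log c) ^ 2 + trigamma a := by
  rw [mk_g_integral 0 2 ha hc]
  have : a + (0:ℕ) = a := by norm_num
  rw [this, mk_phi2_c ha hc]
  have h1 : Real.Gamma a ≠ 0 := (Real.Gamma_pos_of_pos ha).ne'
  have h2 : c ^ a ≠ 0 := (Real.rpow_pos_of_pos hc a).ne'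
  field_simp

lemma mk_B10 {a c : ℝ} (ha : 0 < a) (hc : 0 < c) :
    ∫ t in Ioi (0:ℝ), t ^ 1 * (Real.log t) ^ 0 * mkg a c t = a / c := by
  rw [mk_g_integral 1 0 ha hc]
  have e : a + ((1:ℕ):ℝ) = a + 1 := by norm_num
  rw [e, mk_phi0 (by linarith) hc, Real.Gamma_add_one ha.ne', (mk_cpow_aux hc a).1]
  have h1 : Real.Gamma a ≠ 0 := (Real.Gamma_pos_of_pos ha).ne'
  have h2 : c ^ a ≠ 0 := (Real.rpow_pos_of_pos hc a).ne'
  field_simp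

lemma mk_B11 {a c : ℝ} (ha : 0 < a) (hc : 0 < c) :
    ∫ t in Ioi (0:ℝ), t ^ 1 * (Real.log t) ^ 1 * mkg a c t
      = a / c * (digamma a - Real.log c) + 1 / c := by
  rw [mk_g_integral 1 1 ha hc]
  have e : a + ((1:ℕ):ℝ) = a + 1 := by norm_num
  rw [e, mk_phi1_c (by linarith) hc, Real.Gamma_add_one ha.ne', (mk_cpow_aux hc a).1,
    mk_digamma_add_one ha]
  have h1 : Real.Gamma a ≠ 0 := (Real.Gamma_pos_of_pos ha).ne'
  have h2 : c ^ a ≠ 0 := (Real.rpow_pos_of_pos hc a).ne'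
  have h3 : a ≠ 0 := ha.ne'
  field_simp
  ring

lemma mk_B20 {a c : ℝ} (ha : 0 < a) (hc : 0 < c) :
    ∫ t in Ioi (0:ℝ), t ^ 2 * (Real.log t) ^ 0 * mkg a c t = a * (a + 1) / c ^ 2 := by
  rw [mk_g_integral 2 0 ha hc]
  have e : a + ((2:ℕ):ℝ) = a + 1 + 1 := by push_cast; ring
  rw [e, mk_phi0 (by linarith) hc, Real.Gamma_add_one (by positivity : a + 1 ≠ 0),
    Real.Gamma_add_one ha.ne']
  have e2 : c ^ (a + 1 + 1) = c ^ a * (c * c) := by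
    rw [Real.rpow_add hc, Real.rpow_add hc, Real.rpow_one]
    ring
  rw [e2]
  have h1 : Real.Gamma a ≠ 0 := (Real.Gamma_pos_of_pos ha).ne'
  have h2 : c ^ a ≠ 0 := (Real.rpow_pos_of_pos hc a).ne'
  field_simp

lemma mk_integral_poly {a c : ℝ} (ha : 0 < a) (hc : 0 < c) (p₀ p₁ p₂ q₀ q₁ q₂ : ℝ) :
    ∫ t in Ioi (0:ℝ),
      (p₀ + p₁ * Real.log t + p₂ * Real.log t ^ 2 + q₀ * t + q₁ * (t * Real.log t)
        + q₂ * t ^ 2) * mkg a c t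
    = p₀ + p₁ * (digamma a - Real.log c)
      + p₂ * ((digamma a - Real.log c) ^ 2 + trigamma a)
      + q₀ * (a / c) + q₁ * (a / c * (digamma a - Real.log c) + 1 / c)
      + q₂ * (a * (a + 1) / c ^ 2) := by
  have i00 := (mk_g_integrable 0 0 ha hc).const_mul p₀
  have i01 := (mk_g_integrable 0 1 ha hc).const_mul p₁
  have i02 := (mk_g_integrable 0 2 ha hc).const_mul p₂
  have i10 := (mk_g_integrable 1 0 ha hc).const_mul q₀
  have i11 := (mk_g_integrable 1 1 ha hc).const_mul q₁
  have i20 := (mk_g_integrable 2 0 ha hc).const_mul q₂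
  have hsplit : ∀ t ∈ Ioi (0:ℝ),
      (p₀ + p₁ * Real.log t + p₂ * Real.log t ^ 2 + q₀ * t + q₁ * (t * Real.log t)
        + q₂ * t ^ 2) * mkg a c t
      = p₀ * (t ^ 0 * Real.log t ^ 0 * mkg a c t)
        + (p₁ * (t ^ 0 * Real.log t ^ 1 * mkg a c t)
        + (p₂ * (t ^ 0 * Real.log t ^ 2 * mkg a c t)
        + (q₀ * (t ^ 1 * Real.log t ^ 0 * mkg a c t)
        + (q₁ * (t ^ 1 * Real.log t ^ 1 * mkg a c t)
        + q₂ * (t ^ 2 * Real.log t ^ 0 * mkg a c t))))) := fun t _ => by ring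
  rw [setIntegral_congr_fun measurableSet_Ioi hsplit]
  have e1 := integral_add i00 (i01.add (i02.add (i10.add (i11.add i20))))
  simp only [Pi.add_apply] at e1
  rw [e1]
  have e2 := integral_add i01 (i02.add (i10.add (i11.add i20)))
  simp only [Pi.add_apply] at e2
  rw [e2]
  have e3 := integral_add i02 (i10.add (i11.add i20))
  simp only [Pi.add_apply] at e3
  rw [e3]
  have e4 := integral_add i10 (i11.add i20)
  simp only [Pi.add_apply] at e4
  rw [e4]
  have e5 := integral_add i11 i20
  rw [e5]
  rw [integral_const_mul, integral_const_mul, integral_const_mul, integral_const_mul,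
    integral_const_mul, integral_const_mul,
    mk_B00 ha hc, mk_B01 ha hc, mk_B02 ha hc, mk_B10 ha hc, mk_B11 ha hc, mk_B20 ha hc]
  ring

lemma mk_shift (f : ℝ → ℝ) (x : ℝ) :
    ∫ y in Ioi x, f (y - x) = ∫ v in Ioi (0:ℝ), f v := by
  have h : ∀ y : ℝ, (Ioi x).indicator (fun y => f (y - x)) y = (Ioi 0).indicator f (y - x) := by
    intro y
    by_cases hy : y ∈ Ioi x
    · rw [indicator_of_mem hy, indicator_of_mem (by simpa [sub_pos] using hy)]
    · rw [indicator_of_notMem hy, indicator_of_notMem (by simpa [sub_pos] using hy)]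
  rw [← integral_indicator measurableSet_Ioi, ← integral_indicator measurableSet_Ioi]
  simp_rw [h]
  exact integral_sub_right_eq_self ((Ioi (0:ℝ)).indicator f) x

lemma mk_shift_poly {α₂ c : ℝ} (h₂ : 0 < α₂) (hc : 0 < c) (x : ℝ)
    (p₀ p₁ p₂ q₀ q₁ q₂ : ℝ) :
    (∫ y in Ioi x, (fun v => (p₀ + p₁ * Real.log v + p₂ * Real.log v ^ 2 + q₀ * v
        + q₁ * (v * Real.log v) + q₂ * v ^ 2) * mkg α₂ c v) (y - x))
      = p₀ + p₁ * (digamma α₂ - Real.log c)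
        + p₂ * ((digamma α₂ - Real.log c) ^ 2 + trigamma α₂)
        + q₀ * (α₂ / c) + q₁ * (α₂ / c * (digamma α₂ - Real.log c) + 1 / c)
        + q₂ * (α₂ * (α₂ + 1) / c ^ 2) := by
  rw [mk_shift (fun v => (p₀ + p₁ * Real.log v + p₂ * Real.log v ^ 2 + q₀ * v
        + q₁ * (v * Real.log v) + q₂ * v ^ 2) * mkg α₂ c v) x, mk_integral_poly h₂ hc]

lemma mk_factor {α₁ c α₂ : ℝ} (hc : 0 < c) {x y : ℝ} (hx : 0 < x) (hy : x < y) :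
    mckayPDF α₁ c α₂ x y = mkg α₁ c x * mkg α₂ c (y - x) := by
  rw [mckayPDF, mkg, mkg, Real.rpow_add hc]
  have he : Real.exp (-(c * y)) = Real.exp (-(c * x)) * Real.exp (-(c * (y - x))) := by
    rw [← Real.exp_add]
    ring_nf
  rw [he]
  ring

lemma mk_logm_eq {c α₂ : ℝ} (hc : 0 < c) (h₂ : 0 < α₂) {x y : ℝ} (hx : 0 < x) (hy : x < y)
    {a : ℝ} (ha : 0 < a) :
    Real.log (mckayPDF a c α₂ x y)
      = (a + α₂) * Real.log c + (a - 1) * Real.log x + (α₂ - 1) * Real.log (y - x)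
        + (-(c * y)) - Real.log (Real.Gamma a) - Real.log (Real.Gamma α₂) := by
  have hyx : 0 < y - x := sub_pos.mpr hy
  have p1 : (0:ℝ) < c ^ (a + α₂) := Real.rpow_pos_of_pos hc _
  have p2 : (0:ℝ) < x ^ (a - 1) := Real.rpow_pos_of_pos hx _
  have p3 : (0:ℝ) < (y - x) ^ (α₂ - 1) := Real.rpow_pos_of_pos hyx _
  have p4 := Real.exp_pos (-(c * y))
  have p5 := Real.Gamma_pos_of_pos ha
  have p6 := Real.Gamma_pos_of_pos h₂
  rw [mckayPDF, Real.log_div (by positivity) (by positivity),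
    Real.log_mul (by positivity) p4.ne', Real.log_mul (by positivity) p3.ne',
    Real.log_mul p1.ne' p2.ne', Real.log_mul p5.ne' p6.ne',
    Real.log_rpow hc, Real.log_rpow hx, Real.log_rpow hyx, Real.log_exp]
  ring

lemma mk_hasDerivAt_logGamma {a : ℝ} (ha : 0 < a) :
    HasDerivAt (fun u => Real.log (Real.Gamma u)) (digamma a) a := by
  have hne : Real.Gamma a ≠ 0 := (Real.Gamma_pos_of_pos ha).ne'
  have h := (mk_hasDerivAt_Gamma ha).log hne
  rwa [mk_phi1_one ha, mul_div_assoc, div_self hne, mul_one] at h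

lemma mk_score1 {α₁ c α₂ : ℝ} (h₁ : 0 < α₁) (hc : 0 < c) (h₂ : 0 < α₂) {x y : ℝ}
    (hx : 0 < x) (hy : x < y) :
    deriv (fun a => Real.log (mckayPDF a c α₂ x y)) α₁
      = Real.log c + Real.log x - digamma α₁ := by
  have hd : HasDerivAt (fun a : ℝ => (a + α₂) * Real.log c + (a - 1) * Real.log x
      + (α₂ - 1) * Real.log (y - x) + (-(c * y)) - Real.log (Real.Gamma a)
      - Real.log (Real.Gamma α₂))
      (Real.log c + Real.log x - digamma α₁) α₁ := by
    have t1 : HasDerivAt (fun a : ℝ => (a + α₂) * Real.log c) (Real.log c) α₁ := by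
      simpa using ((hasDerivAt_id α₁).add_const α₂).mul_const (Real.log c)
    have t2 : HasDerivAt (fun a : ℝ => (a - 1) * Real.log x) (Real.log x) α₁ := by
      simpa using ((hasDerivAt_id α₁).sub_const 1).mul_const (Real.log x)
    exact ((((t1.add t2).add_const ((α₂ - 1) * Real.log (y - x))).add_const
      (-(c * y))).sub (mk_hasDerivAt_logGamma h₁)).sub_const (Real.log (Real.Gamma α₂))
  have hev : (fun a => Real.log (mckayPDF a c α₂ x y)) =ᶠ[nhds α₁]
      (fun a => (a + α₂) * Real.log c + (a - 1) * Real.log x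
        + (α₂ - 1) * Real.log (y - x) + (-(c * y)) - Real.log (Real.Gamma a)
        - Real.log (Real.Gamma α₂)) := by
    filter_upwards [Ioi_mem_nhds h₁] with a ha' using mk_logm_eq hc h₂ hx hy ha'
  exact (hd.congr_of_eventuallyEq hev).deriv

lemma mk_score2 {α₁ c α₂ : ℝ} (h₁ : 0 < α₁) (hc : 0 < c) (h₂ : 0 < α₂) {x y : ℝ}
    (hx : 0 < x) (hy : x < y) :
    deriv (fun s => Real.log (mckayPDF α₁ s α₂ x y)) c = (α₁ + α₂) / c - y := by
  have hd : HasDerivAt (fun s : ℝ => (α₁ + α₂) * Real.log s + (α₁ - 1) * Real.log x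
      + (α₂ - 1) * Real.log (y - x) + (-(s * y)) - Real.log (Real.Gamma α₁)
      - Real.log (Real.Gamma α₂))
      ((α₁ + α₂) / c - y) c := by
    have t1 : HasDerivAt (fun s : ℝ => (α₁ + α₂) * Real.log s) ((α₁ + α₂) * c⁻¹) c :=
      (Real.hasDerivAt_log hc.ne').const_mul (α₁ + α₂)
    have t4 : HasDerivAt (fun s : ℝ => -(s * y)) (-y) c := by
      exact ((hasDerivAt_id c).mul_const y).neg.congr_deriv (by simp)
    have h := ((((t1.add_const ((α₁ - 1) * Real.log x)).add_const
      ((α₂ - 1) * Real.log (y - x))).add t4).sub_const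
      (Real.log (Real.Gamma α₁))).sub_const (Real.log (Real.Gamma α₂))
    exact h.congr_deriv (by ring)
  have hev : (fun s => Real.log (mckayPDF α₁ s α₂ x y)) =ᶠ[nhds c]
      (fun s : ℝ => (α₁ + α₂) * Real.log s + (α₁ - 1) * Real.log x
        + (α₂ - 1) * Real.log (y - x) + (-(s * y)) - Real.log (Real.Gamma α₁)
        - Real.log (Real.Gamma α₂)) := by
    filter_upwards [Ioi_mem_nhds hc] with s hs
    rw [mk_logm_eq hs h₂ hx hy h₁]
  exact (hd.congr_of_eventuallyEq hev).deriv

lemma mk_score3 {α₁ c α₂ : ℝ} (h₁ : 0 < α₁) (hc : 0 < c) (h₂ : 0 < α₂) {x y : ℝ}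
    (hx : 0 < x) (hy : x < y) :
    deriv (fun b => Real.log (mckayPDF α₁ c b x y)) α₂
      = Real.log c + Real.log (y - x) - digamma α₂ := by
  have hd : HasDerivAt (fun b : ℝ => (α₁ + b) * Real.log c + (α₁ - 1) * Real.log x
      + (b - 1) * Real.log (y - x) + (-(c * y)) - Real.log (Real.Gamma α₁)
      - Real.log (Real.Gamma b))
      (Real.log c + Real.log (y - x) - digamma α₂) α₂ := by
    have t1 : HasDerivAt (fun b : ℝ => (α₁ + b) * Real.log c) (Real.log c) α₂ := by
      simpa using ((hasDerivAt_id α₂).const_add α₁).mul_const (Real.log c)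
    have t2 : HasDerivAt (fun b : ℝ => (b - 1) * Real.log (y - x)) (Real.log (y - x)) α₂ := by
      simpa using ((hasDerivAt_id α₂).sub_const 1).mul_const (Real.log (y - x))
    have h := ((((t1.add_const ((α₁ - 1) * Real.log x)).add t2).add_const
      (-(c * y))).sub_const (Real.log (Real.Gamma α₁))).sub (mk_hasDerivAt_logGamma h₂)
    exact h.congr_deriv (by ring)
  have hev : (fun b => Real.log (mckayPDF α₁ c b x y)) =ᶠ[nhds α₂]
      (fun b : ℝ => (α₁ + b) * Real.log c + (α₁ - 1) * Real.log x
        + (b - 1) * Real.log (y - x) + (-(c * y)) - Real.log (Real.Gamma α₁)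
        - Real.log (Real.Gamma b)) := by
    filter_upwards [Ioi_mem_nhds h₂] with b hb
    rw [mk_logm_eq hc hb hx hy h₁]
  exact (hd.congr_of_eventuallyEq hev).deriv

theorem mckay_fisher_info (α₁ c α₂ : ℝ) (h₁ : 0 < α₁) (hc : 0 < c) (h₂ : 0 < α₂) :
    (∫ x in Set.Ioi (0 : ℝ), ∫ y in Set.Ioi x,
        (deriv (fun a => Real.log (mckayPDF a c α₂ x y)) α₁) ^ 2 *
          mckayPDF α₁ c α₂ x y) = trigamma α₁ ∧
    (∫ x in Set.Ioi (0 : ℝ), ∫ y in Set.Ioi x,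
        (deriv (fun a => Real.log (mckayPDF a c α₂ x y)) α₁) *
          (deriv (fun s => Real.log (mckayPDF α₁ s α₂ x y)) c) *
          mckayPDF α₁ c α₂ x y) = -(1 / c) ∧
    (∫ x in Set.Ioi (0 : ℝ), ∫ y in Set.Ioi x,
        (deriv (fun a => Real.log (mckayPDF a c α₂ x y)) α₁) *
          (deriv (fun b => Real.log (mckayPDF α₁ c b x y)) α₂) *
          mckayPDF α₁ c α₂ x y) = 0 ∧
    (∫ x in Set.Ioi (0 : ℝ), ∫ y in Set.Ioi x,
        (deriv (fun s => Real.log (mckayPDF α₁ s α₂ x y)) c) ^ 2 *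
          mckayPDF α₁ c α₂ x y) = (α₁ + α₂) / c ^ 2 ∧
    (∫ x in Set.Ioi (0 : ℝ), ∫ y in Set.Ioi x,
        (deriv (fun s => Real.log (mckayPDF α₁ s α₂ x y)) c) *
          (deriv (fun b => Real.log (mckayPDF α₁ c b x y)) α₂) *
          mckayPDF α₁ c α₂ x y) = -(1 / c) ∧
    (∫ x in Set.Ioi (0 : ℝ), ∫ y in Set.Ioi x,
        (deriv (fun b => Real.log (mckayPDF α₁ c b x y)) α₂) ^ 2 *
          mckayPDF α₁ c α₂ x y) = trigamma α₂ := by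
  refine ⟨?_, ?_, ?_, ?_, ?_, ?_⟩
  · -- g₁₁
    have inner : EqOn
        (fun x : ℝ => ∫ y in Ioi x,
          (deriv (fun a => Real.log (mckayPDF a c α₂ x y)) α₁) ^ 2 * mckayPDF α₁ c α₂ x y)
        (fun x : ℝ => ((Real.log c - digamma α₁) ^ 2
          + (2 * (Real.log c - digamma α₁)) * Real.log x + 1 * Real.log x ^ 2 + 0 * x
          + 0 * (x * Real.log x) + 0 * x ^ 2) * mkg α₁ c x) (Ioi 0) := by
      intro x hx
      have hx0 : (0:ℝ) < x := hx
      have step1 : (∫ y in Ioi x,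
          (deriv (fun a => Real.log (mckayPDF a c α₂ x y)) α₁) ^ 2 * mckayPDF α₁ c α₂ x y)
          = ∫ y in Ioi x, (fun v =>
              ((Real.log c + Real.log x - digamma α₁) ^ 2 * mkg α₁ c x + 0 * Real.log v
                + 0 * Real.log v ^ 2 + 0 * v + 0 * (v * Real.log v) + 0 * v ^ 2)
              * mkg α₂ c v) (y - x) := by
        refine setIntegral_congr_fun measurableSet_Ioi fun y hy => ?_
        have hxy : x < y := hy
        simp only
        rw [mk_score1 h₁ hc h₂ hx0 hxy, mk_factor hc hx0 hxy]
        ring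
      simp only
      rw [step1, mk_shift_poly h₂ hc]
      ring
    rw [setIntegral_congr_fun measurableSet_Ioi inner, mk_integral_poly h₁ hc]
    ring
  · -- g₁₂
    have inner : EqOn
        (fun x : ℝ => ∫ y in Ioi x,
          (deriv (fun a => Real.log (mckayPDF a c α₂ x y)) α₁) *
            (deriv (fun s => Real.log (mckayPDF α₁ s α₂ x y)) c) * mckayPDF α₁ c α₂ x y)
        (fun x : ℝ => ((Real.log c - digamma α₁) * (α₁ / c)
          + (α₁ / c) * Real.log x + 0 * Real.log x ^ 2 + (-(Real.log c - digamma α₁)) * x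
          + (-1) * (x * Real.log x) + 0 * x ^ 2) * mkg α₁ c x) (Ioi 0) := by
      intro x hx
      have hx0 : (0:ℝ) < x := hx
      have step1 : (∫ y in Ioi x,
          (deriv (fun a => Real.log (mckayPDF a c α₂ x y)) α₁) *
            (deriv (fun s => Real.log (mckayPDF α₁ s α₂ x y)) c) * mckayPDF α₁ c α₂ x y)
          = ∫ y in Ioi x, (fun v =>
              ((Real.log c + Real.log x - digamma α₁) * mkg α₁ c x * ((α₁ + α₂) / c - x)
                + 0 * Real.log v + 0 * Real.log v ^ 2
                + (-((Real.log c + Real.log x - digamma α₁) * mkg α₁ c x)) * v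
                + 0 * (v * Real.log v) + 0 * v ^ 2)
              * mkg α₂ c v) (y - x) := by
        refine setIntegral_congr_fun measurableSet_Ioi fun y hy => ?_
        have hxy : x < y := hy
        simp only
        rw [mk_score1 h₁ hc h₂ hx0 hxy, mk_score2 h₁ hc h₂ hx0 hxy, mk_factor hc hx0 hxy]
        ring
      simp only
      rw [step1, mk_shift_poly h₂ hc]
      ring
    rw [setIntegral_congr_fun measurableSet_Ioi inner, mk_integral_poly h₁ hc]
    ring
  · -- g₁₃
    have inner : EqOn
        (fun x : ℝ => ∫ y in Ioi x,
          (deriv (fun a => Real.log (mckayPDF a c α₂ x y)) α₁) *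
            (deriv (fun b => Real.log (mckayPDF α₁ c b x y)) α₂) * mckayPDF α₁ c α₂ x y)
        (fun x : ℝ => (0 + 0 * Real.log x + 0 * Real.log x ^ 2 + 0 * x
          + 0 * (x * Real.log x) + 0 * x ^ 2) * mkg α₁ c x) (Ioi 0) := by
      intro x hx
      have hx0 : (0:ℝ) < x := hx
      have step1 : (∫ y in Ioi x,
          (deriv (fun a => Real.log (mckayPDF a c α₂ x y)) α₁) *
            (deriv (fun b => Real.log (mckayPDF α₁ c b x y)) α₂) * mckayPDF α₁ c α₂ x y)
          = ∫ y in Ioi x, (fun v =>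
              ((Real.log c + Real.log x - digamma α₁) * mkg α₁ c x
                  * (Real.log c - digamma α₂)
                + ((Real.log c + Real.log x - digamma α₁) * mkg α₁ c x) * Real.log v
                + 0 * Real.log v ^ 2 + 0 * v + 0 * (v * Real.log v) + 0 * v ^ 2)
              * mkg α₂ c v) (y - x) := by
        refine setIntegral_congr_fun measurableSet_Ioi fun y hy => ?_
        have hxy : x < y := hy
        simp only
        rw [mk_score1 h₁ hc h₂ hx0 hxy, mk_score3 h₁ hc h₂ hx0 hxy, mk_factor hc hx0 hxy]
        ring
      simp only
      rw [step1, mk_shift_poly h₂ hc]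
      ring
    rw [setIntegral_congr_fun measurableSet_Ioi inner, mk_integral_poly h₁ hc]
    ring
  · -- g₂₂
    have inner : EqOn
        (fun x : ℝ => ∫ y in Ioi x,
          (deriv (fun s => Real.log (mckayPDF α₁ s α₂ x y)) c) ^ 2 * mckayPDF α₁ c α₂ x y)
        (fun x : ℝ => (((α₁ + α₂) / c * ((α₁ + α₂) / c)
            - 2 * ((α₁ + α₂) / c) * (α₂ / c) + α₂ * (α₂ + 1) / c ^ 2)
          + 0 * Real.log x + 0 * Real.log x ^ 2
          + (-(2 * ((α₁ + α₂) / c)) + 2 * (α₂ / c)) * x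
          + 0 * (x * Real.log x) + 1 * x ^ 2) * mkg α₁ c x) (Ioi 0) := by
      intro x hx
      have hx0 : (0:ℝ) < x := hx
      have step1 : (∫ y in Ioi x,
          (deriv (fun s => Real.log (mckayPDF α₁ s α₂ x y)) c) ^ 2 * mckayPDF α₁ c α₂ x y)
          = ∫ y in Ioi x, (fun v =>
              (mkg α₁ c x * ((α₁ + α₂) / c - x) ^ 2 + 0 * Real.log v + 0 * Real.log v ^ 2
                + (-(2 * mkg α₁ c x * ((α₁ + α₂) / c - x))) * v
                + 0 * (v * Real.log v) + mkg α₁ c x * v ^ 2)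
              * mkg α₂ c v) (y - x) := by
        refine setIntegral_congr_fun measurableSet_Ioi fun y hy => ?_
        have hxy : x < y := hy
        simp only
        rw [mk_score2 h₁ hc h₂ hx0 hxy, mk_factor hc hx0 hxy]
        ring
      simp only
      rw [step1, mk_shift_poly h₂ hc]
      ring
    rw [setIntegral_congr_fun measurableSet_Ioi inner, mk_integral_poly h₁ hc]
    ring
  · -- g₂₃
    have inner : EqOn
        (fun x : ℝ => ∫ y in Ioi x,
          (deriv (fun s => Real.log (mckayPDF α₁ s α₂ x y)) c) *
            (deriv (fun b => Real.log (mckayPDF α₁ c b x y)) α₂) * mckayPDF α₁ c α₂ x y)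
        (fun x : ℝ => ((-(1 / c)) + 0 * Real.log x + 0 * Real.log x ^ 2 + 0 * x
          + 0 * (x * Real.log x) + 0 * x ^ 2) * mkg α₁ c x) (Ioi 0) := by
      intro x hx
      have hx0 : (0:ℝ) < x := hx
      have step1 : (∫ y in Ioi x,
          (deriv (fun s => Real.log (mckayPDF α₁ s α₂ x y)) c) *
            (deriv (fun b => Real.log (mckayPDF α₁ c b x y)) α₂) * mckayPDF α₁ c α₂ x y)
          = ∫ y in Ioi x, (fun v =>
              (mkg α₁ c x * ((α₁ + α₂) / c - x) * (Real.log c - digamma α₂)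
                + (mkg α₁ c x * ((α₁ + α₂) / c - x)) * Real.log v + 0 * Real.log v ^ 2
                + (-(mkg α₁ c x * (Real.log c - digamma α₂))) * v
                + (-(mkg α₁ c x)) * (v * Real.log v) + 0 * v ^ 2)
              * mkg α₂ c v) (y - x) := by
        refine setIntegral_congr_fun measurableSet_Ioi fun y hy => ?_
        have hxy : x < y := hy
        simp only
        rw [mk_score2 h₁ hc h₂ hx0 hxy, mk_score3 h₁ hc h₂ hx0 hxy, mk_factor hc hx0 hxy]
        ring
      simp only
      rw [step1, mk_shift_poly h₂ hc]
      ring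
    rw [setIntegral_congr_fun measurableSet_Ioi inner, mk_integral_poly h₁ hc]
    ring
  · -- g₃₃
    have inner : EqOn
        (fun x : ℝ => ∫ y in Ioi x,
          (deriv (fun b => Real.log (mckayPDF α₁ c b x y)) α₂) ^ 2 * mckayPDF α₁ c α₂ x y)
        (fun x : ℝ => (trigamma α₂ + 0 * Real.log x + 0 * Real.log x ^ 2 + 0 * x
          + 0 * (x * Real.log x) + 0 * x ^ 2) * mkg α₁ c x) (Ioi 0) := by
      intro x hx
      have hx0 : (0:ℝ) < x := hx
      have step1 : (∫ y in Ioi x,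
          (deriv (fun b => Real.log (mckayPDF α₁ c b x y)) α₂) ^ 2 * mckayPDF α₁ c α₂ x y)
          = ∫ y in Ioi x, (fun v =>
              (mkg α₁ c x * (Real.log c - digamma α₂) ^ 2
                + (2 * mkg α₁ c x * (Real.log c - digamma α₂)) * Real.log v
                + mkg α₁ c x * Real.log v ^ 2 + 0 * v + 0 * (v * Real.log v) + 0 * v ^ 2)
              * mkg α₂ c v) (y - x) := by
        refine setIntegral_congr_fun measurableSet_Ioi fun y hy => ?_
        have hxy : x < y := hy
        simp only
        rw [mk_score3 h₁ hc h₂ hx0 hxy, mk_factor hc hx0 hxy]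
        ring
      simp only
      rw [step1, mk_shift_poly h₂ hc]
      ring
    rw [setIntegral_congr_fun measurableSet_Ioi inner, mk_integral_poly h₁ hc]
    ring
end

section
/- For all α₁, c, α₂ > 0, the Shannon entropy of the McKay bivariate density satisfies -∫₀^∞ ∫ₓ^∞ m(x, y) log m(x, y) dy dx = (α₁ + α₂) + log(Γ(α₁) Γ(α₂) / c²) - (α₁ - 1)ψ(α₁) - (α₂ - 1)ψ(α₂). -/
open MeasureTheory Set Real

lemma gInt {s c : ℝ} (hs : 0 < s) (hc : 0 < c) :
    IntegrableOn (fun t : ℝ => t ^ (s-1) * Real.exp (-(c*t))) (Ioi 0) := by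
  have h := integrableOn_rpow_mul_exp_neg_mul_rpow (p := 1) (s := s - 1) (b := c)
    (by linarith) one_pos hc
  refine h.congr_fun (fun x hx => ?_) measurableSet_Ioi
  simp [Real.rpow_one, neg_mul]

lemma gIntMul {s c : ℝ} (hs : 0 < s) (hc : 0 < c) :
    IntegrableOn (fun t : ℝ => t ^ (s-1) * Real.exp (-(c*t)) * t) (Ioi 0) := by
  refine (gInt (by linarith : (0:ℝ) < s + 1) hc).congr_fun (fun x hx => ?_) measurableSet_Ioi
  have hx0 : (0:ℝ) < x := hx
  beta_reduce
  rw [show (s+1)-1 = (s-1)+1 by ring, Real.rpow_add_one hx0.ne']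
  ring

lemma gVal {s c : ℝ} (hs : 0 < s) (hc : 0 < c) :
    ∫ t in Ioi 0, t ^ (s-1) * Real.exp (-(c*t)) = Real.Gamma s / c ^ s := by
  rw [Real.integral_rpow_mul_exp_neg_mul_Ioi hs hc, one_div, ← Real.rpow_neg_one c,
    ← Real.rpow_mul hc.le, neg_one_mul, Real.rpow_neg hc.le, inv_mul_eq_div]

lemma gValMul {s c : ℝ} (hs : 0 < s) (hc : 0 < c) :
    ∫ t in Ioi 0, t ^ (s-1) * Real.exp (-(c*t)) * t = s * Real.Gamma s / (c ^ s * c) := by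
  have h : ∫ t in Ioi 0, t ^ ((s+1)-1) * Real.exp (-(c*t)) = Real.Gamma (s+1) / c ^ (s+1) :=
    gVal (by linarith) hc
  have hEq : ∀ x ∈ Ioi (0:ℝ), x ^ (s-1) * Real.exp (-(c*x)) * x
      = x ^ ((s+1)-1) * Real.exp (-(c*x)) := by
    intro x hx
    have hx0 : (0:ℝ) < x := hx
    rw [show (s+1)-1 = (s-1)+1 by ring, Real.rpow_add_one hx0.ne']
    ring
  rw [setIntegral_congr_fun measurableSet_Ioi hEq, h, Real.Gamma_add_one hs.ne',
    Real.rpow_add_one hc.ne']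

lemma shiftIoi (f : ℝ → ℝ) (a : ℝ) : ∫ y in Ioi a, f y = ∫ v in Ioi 0, f (v + a) := by
  rw [← integral_indicator measurableSet_Ioi, ← integral_indicator measurableSet_Ioi,
    ← integral_add_right_eq_self ((Ioi a).indicator f) a]
  congr 1; ext v
  simp [Set.indicator_apply, lt_add_iff_pos_left]

lemma hasDerivAt_realGamma {s : ℝ} (hs : 0 < s) :
    HasDerivAt Real.Gamma (∫ t in Ioi 0, t ^ (s-1) * Real.exp (-t) * Real.log t) s := by
  have h1 : HasDerivAt Complex.GammaIntegral
      (∫ t : ℝ in Ioi 0, (t : ℂ) ^ ((s : ℂ) - 1) * (Real.log t * Real.exp (-t))) s :=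
    Complex.hasDerivAt_GammaIntegral (by simpa using hs)
  have heq : (fun z : ℂ => Complex.Gamma z) =ᶠ[nhds (s : ℂ)] Complex.GammaIntegral := by
    have hopen : IsOpen {z : ℂ | 0 < z.re} := isOpen_lt continuous_const Complex.continuous_re
    filter_upwards [hopen.mem_nhds (by simpa using hs)] with z hz
    exact Complex.Gamma_eq_integral hz
  have h2 : HasDerivAt Complex.Gamma
      (∫ t : ℝ in Ioi 0, (t : ℂ) ^ ((s : ℂ) - 1) * (Real.log t * Real.exp (-t))) s :=
    h1.congr_of_eventuallyEq heq
  have h3 := h2.real_of_complex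
  have h4 : (fun x : ℝ => (Complex.Gamma (x : ℂ)).re) = Real.Gamma := by
    funext x; rw [Complex.Gamma_ofReal, Complex.ofReal_re]
  have h5 : (∫ t : ℝ in Ioi 0, (t : ℂ) ^ ((s : ℂ) - 1) * (Real.log t * Real.exp (-t)))
      = ((∫ t : ℝ in Ioi 0, t ^ (s-1) * Real.exp (-t) * Real.log t : ℝ) : ℂ) := by
    rw [show ((∫ t : ℝ in Ioi 0, t ^ (s-1) * Real.exp (-t) * Real.log t : ℝ) : ℂ)
      = ∫ t : ℝ in Ioi 0, ((t ^ (s-1) * Real.exp (-t) * Real.log t : ℝ) : ℂ) from integral_ofReal.symm]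
    refine setIntegral_congr_fun measurableSet_Ioi (fun t ht => ?_)
    rw [show ((s : ℂ) - 1) = ((s - 1 : ℝ) : ℂ) by push_cast; ring,
      ← Complex.ofReal_cpow (le_of_lt ht)]
    push_cast
    ring
  rw [h4, h5] at h3
  simpa using h3

lemma gIntLog {s c : ℝ} (hs : 0 < s) (hc : 0 < c) :
    IntegrableOn (fun t : ℝ => t ^ (s-1) * Real.exp (-(c*t)) * Real.log t) (Ioi 0) := by
  refine Integrable.mono'
    (g := fun t => (2/s) * (t ^ (s/2-1) * Real.exp (-(c*t))) + t ^ ((s+1)-1) * Real.exp (-(c*t)))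
    (((gInt (by positivity) hc).const_mul _).add (gInt (by linarith) hc))
    (ContinuousOn.aestronglyMeasurable
      ((((continuousOn_id.rpow_const (fun x hx => Or.inl (ne_of_gt hx))).mul
        ((Real.continuous_exp.comp (continuous_const.mul continuous_id).neg).continuousOn)).mul
        (Real.continuousOn_log.mono (fun x hx => ne_of_gt hx)))) measurableSet_Ioi) ?_
  filter_upwards [self_mem_ae_restrict measurableSet_Ioi] with t ht
  have ht0 : (0:ℝ) < t := ht
  have hexp : (0:ℝ) < Real.exp (-(c*t)) := Real.exp_pos _
  have hrp : (0:ℝ) < t ^ (s-1) := Real.rpow_pos_of_pos ht0 _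
  rw [Real.norm_eq_abs, abs_mul, abs_of_nonneg (by positivity : (0:ℝ) ≤ t ^ (s-1) * Real.exp (-(c*t)))]
  rcases le_or_gt t 1 with h1 | h1
  · have hlog : |Real.log t| = -Real.log t := by
      rw [abs_of_nonpos (Real.log_nonpos ht0.le h1)]
    have key : -Real.log t ≤ (2/s) * t ^ (-(s/2)) := by
      have h2 : Real.log (t ^ (-(s/2))) = (-(s/2)) * Real.log t := Real.log_rpow ht0 _
      have h3 : Real.log (t ^ (-(s/2))) ≤ t ^ (-(s/2)) - 1 :=
        Real.log_le_sub_one_of_pos (Real.rpow_pos_of_pos ht0 _)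
      have h4 : (-(s/2)) * Real.log t ≤ t ^ (-(s/2)) := by
        rw [← h2]; linarith [h3, (Real.rpow_pos_of_pos ht0 (-(s/2)))]
      have hs' : (0:ℝ) < 2/s := by positivity
      calc -Real.log t = (2/s) * ((-(s/2)) * Real.log t) := by field_simp
        _ ≤ (2/s) * t ^ (-(s/2)) := mul_le_mul_of_nonneg_left h4 hs'.le
    have hcomb : t ^ (s-1) * Real.exp (-(c*t)) * |Real.log t|
        ≤ (2/s) * (t ^ (s/2-1) * Real.exp (-(c*t))) := by
      rw [hlog]
      have h6 : t ^ (s-1) * Real.exp (-(c*t)) * (-Real.log t)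
          ≤ t ^ (s-1) * Real.exp (-(c*t)) * ((2/s) * t ^ (-(s/2))) :=
        mul_le_mul_of_nonneg_left key (by positivity)
      refine h6.trans (le_of_eq ?_)
      rw [show t ^ (s/2-1) = t ^ (s-1) * t ^ (-(s/2)) by
        rw [← Real.rpow_add ht0]; ring_nf]
      ring
    have : (0:ℝ) ≤ t ^ ((s+1)-1) * Real.exp (-(c*t)) := by positivity
    linarith
  · have hlog : |Real.log t| = Real.log t := abs_of_nonneg (Real.log_nonneg h1.le)
    have key : Real.log t ≤ t := (Real.log_le_sub_one_of_pos ht0).trans (by linarith)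
    have hcomb : t ^ (s-1) * Real.exp (-(c*t)) * |Real.log t|
        ≤ t ^ ((s+1)-1) * Real.exp (-(c*t)) := by
      rw [hlog]
      have h5 : t ^ (s-1) * Real.exp (-(c*t)) * Real.log t
          ≤ t ^ (s-1) * Real.exp (-(c*t)) * t :=
        mul_le_mul_of_nonneg_left key (by positivity)
      refine h5.trans (le_of_eq ?_)
      rw [show t ^ ((s+1)-1) = t ^ (s-1) * t by
        rw [show (s+1)-1 = (s-1) + 1 by ring, Real.rpow_add_one ht0.ne']]
      ring
    have : (0:ℝ) ≤ (2/s) * (t ^ (s/2-1) * Real.exp (-(c*t))) := by positivity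
    linarith

lemma gValLog {s c : ℝ} (hs : 0 < s) (hc : 0 < c) :
    ∫ t in Ioi 0, t ^ (s-1) * Real.exp (-(c*t)) * Real.log t
      = (deriv Real.Gamma s - Real.Gamma s * Real.log c) / c ^ s := by
  have base : ∫ t in Ioi 0, t ^ (s-1) * Real.exp (-t) * Real.log t = deriv Real.Gamma s :=
    (hasDerivAt_realGamma hs).deriv.symm
  have hscale := integral_comp_mul_left_Ioi
    (fun t => t ^ (s-1) * Real.exp (-t) * Real.log t) 0 hc
  rw [mul_zero, base, smul_eq_mul] at hscale
  have hexpand : ∫ x in Ioi 0, (fun t => t ^ (s-1) * Real.exp (-t) * Real.log t) (c * x)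
      = c ^ (s-1) * (Real.log c * (Real.Gamma s / c ^ s)
        + ∫ t in Ioi 0, t ^ (s-1) * Real.exp (-(c*t)) * Real.log t) := by
    rw [← gVal hs hc, ← integral_const_mul,
      ← integral_add ((gInt hs hc).const_mul _) (gIntLog hs hc), ← integral_const_mul]
    refine setIntegral_congr_fun measurableSet_Ioi (fun x hx => ?_)
    have hx0 : (0:ℝ) < x := hx
    simp only
    rw [Real.mul_rpow hc.le hx0.le, Real.log_mul hc.ne' hx0.ne']
    ring
  rw [hexpand] at hscale
  have hcs : c ^ s = c ^ (s-1) * c := by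
    rw [← Real.rpow_add_one hc.ne' (s-1)]; ring_nf
  have hne : (c:ℝ) ^ (s-1) ≠ 0 := (Real.rpow_pos_of_pos hc _).ne'
  have hne2 : (c:ℝ) ^ s ≠ 0 := (Real.rpow_pos_of_pos hc _).ne'
  set J := ∫ t in Ioi 0, t ^ (s-1) * Real.exp (-(c*t)) * Real.log t
  have h1 : c ^ (s-1) * (Real.log c * (Real.Gamma s / c ^ s) + J) = c⁻¹ * deriv Real.Gamma s :=
    hscale
  rw [eq_div_iff hne2, hcs]
  have h3 : c * (c ^ (s-1) * (Real.log c * (Real.Gamma s / (c ^ (s-1) * c)) + J))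
      = deriv Real.Gamma s := by rw [← hcs, h1]; field_simp
  field_simp at h3
  have h4 : Real.log c * Real.Gamma s + J * (c ^ (s-1) * c) = deriv Real.Gamma s :=
    by linear_combination h3
  linarith

theorem mckay_entropy (α₁ c α₂ : ℝ) (h₁ : 0 < α₁) (hc : 0 < c) (h₂ : 0 < α₂) :
    -∫ x in Set.Ioi (0 : ℝ), ∫ y in Set.Ioi x,
        mckayPDF α₁ c α₂ x y * Real.log (mckayPDF α₁ c α₂ x y) =
      (α₁ + α₂) + Real.log (Real.Gamma α₁ * Real.Gamma α₂ / c ^ 2) -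
        (α₁ - 1) * digamma α₁ - (α₂ - 1) * digamma α₂ := by
  have hΓa : 0 < Real.Gamma α₁ := Real.Gamma_pos_of_pos h₁
  have hΓb : 0 < Real.Gamma α₂ := Real.Gamma_pos_of_pos h₂
  have hK : 0 < c ^ (α₁ + α₂) / (Real.Gamma α₁ * Real.Gamma α₂) := by positivity
  set K : ℝ := c ^ (α₁ + α₂) / (Real.Gamma α₁ * Real.Gamma α₂) with hKdef
  set R : ℝ := (α₁ + α₂) * Real.log c - Real.log (Real.Gamma α₁ * Real.Gamma α₂) with hRdef
  set D1 : ℝ := deriv Real.Gamma α₁ with hD1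
  set D2 : ℝ := deriv Real.Gamma α₂ with hD2
  have hKlog : Real.log K = R := by
    rw [hKdef, Real.log_div (Real.rpow_pos_of_pos hc _).ne' (mul_pos hΓa hΓb).ne',
      Real.log_rpow hc, hRdef]
  -- inner integral computation
  have hinner : ∀ x ∈ Ioi (0:ℝ),
      (∫ y in Ioi x, mckayPDF α₁ c α₂ x y * Real.log (mckayPDF α₁ c α₂ x y))
      = K * (((R * (Real.Gamma α₂ / c ^ α₂)
            + (α₂-1) * ((D2 - Real.Gamma α₂ * Real.log c) / c ^ α₂)
            - c * (α₂ * Real.Gamma α₂ / (c ^ α₂ * c))) * (x ^ (α₁-1) * Real.exp (-(c*x)))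
          + ((α₁-1) * (Real.Gamma α₂ / c ^ α₂)) * (x ^ (α₁-1) * Real.exp (-(c*x)) * Real.log x)
          - (c * (Real.Gamma α₂ / c ^ α₂)) * (x ^ (α₁-1) * Real.exp (-(c*x)) * x))) := by
    intro x hx
    have hx0 : (0:ℝ) < x := hx
    have hga : 0 < x ^ (α₁-1) * Real.exp (-(c*x)) := by positivity
    rw [shiftIoi]
    have hpt : ∀ v ∈ Ioi (0:ℝ),
        mckayPDF α₁ c α₂ x (v + x) * Real.log (mckayPDF α₁ c α₂ x (v + x))
        = (K * (x ^ (α₁-1) * Real.exp (-(c*x)))) *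
            ((R + (α₁-1) * Real.log x - c*x) * (v ^ (α₂-1) * Real.exp (-(c*v)))
              + (α₂-1) * (v ^ (α₂-1) * Real.exp (-(c*v)) * Real.log v)
              - c * (v ^ (α₂-1) * Real.exp (-(c*v)) * v)) := by
      intro v hv
      have hv0 : (0:ℝ) < v := hv
      have hgb : 0 < v ^ (α₂-1) * Real.exp (-(c*v)) := by positivity
      have hm : mckayPDF α₁ c α₂ x (v + x)
          = K * (x ^ (α₁-1) * Real.exp (-(c*x))) * (v ^ (α₂-1) * Real.exp (-(c*v))) := by
        simp only [mckayPDF, add_sub_cancel_right, hKdef]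
        rw [show -(c*(v+x)) = -(c*v) + -(c*x) by ring, Real.exp_add]
        ring
      have hlog : Real.log (mckayPDF α₁ c α₂ x (v + x))
          = R + (α₁-1) * Real.log x + (α₂-1) * Real.log v - c*v - c*x := by
        rw [hm, Real.log_mul (mul_pos hK hga).ne' hgb.ne', Real.log_mul hK.ne' hga.ne',
          Real.log_mul (Real.rpow_pos_of_pos hx0 _).ne' (Real.exp_pos _).ne',
          Real.log_mul (Real.rpow_pos_of_pos hv0 _).ne' (Real.exp_pos _).ne',
          Real.log_rpow hx0, Real.log_rpow hv0, Real.log_exp, Real.log_exp, hKlog]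
        ring
      rw [hlog, hm]; ring
    have i1 : IntegrableOn (fun v : ℝ => (R + (α₁-1) * Real.log x - c*x)
        * (v ^ (α₂-1) * Real.exp (-(c*v)))) (Ioi 0) := (gInt h₂ hc).const_mul _
    have i2 : IntegrableOn (fun v : ℝ => (α₂-1)
        * (v ^ (α₂-1) * Real.exp (-(c*v)) * Real.log v)) (Ioi 0) := (gIntLog h₂ hc).const_mul _
    have i3 : IntegrableOn (fun v : ℝ => c
        * (v ^ (α₂-1) * Real.exp (-(c*v)) * v)) (Ioi 0) := (gIntMul h₂ hc).const_mul _
    have i12 : IntegrableOn (fun v : ℝ => (R + (α₁-1) * Real.log x - c*x)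
        * (v ^ (α₂-1) * Real.exp (-(c*v)))
        + (α₂-1) * (v ^ (α₂-1) * Real.exp (-(c*v)) * Real.log v)) (Ioi 0) := i1.add i2
    rw [setIntegral_congr_fun measurableSet_Ioi hpt, integral_const_mul,
      integral_sub i12 i3, integral_add i1 i2,
      integral_const_mul, integral_const_mul, integral_const_mul,
      gVal h₂ hc, gValLog h₂ hc, gValMul h₂ hc]
    ring
  have j1 : IntegrableOn (fun x : ℝ => (R * (Real.Gamma α₂ / c ^ α₂)
        + (α₂-1) * ((D2 - Real.Gamma α₂ * Real.log c) / c ^ α₂)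
        - c * (α₂ * Real.Gamma α₂ / (c ^ α₂ * c)))
      * (x ^ (α₁-1) * Real.exp (-(c*x)))) (Ioi 0) := (gInt h₁ hc).const_mul _
  have j2 : IntegrableOn (fun x : ℝ => ((α₁-1) * (Real.Gamma α₂ / c ^ α₂))
      * (x ^ (α₁-1) * Real.exp (-(c*x)) * Real.log x)) (Ioi 0) := (gIntLog h₁ hc).const_mul _
  have j3 : IntegrableOn (fun x : ℝ => (c * (Real.Gamma α₂ / c ^ α₂))
      * (x ^ (α₁-1) * Real.exp (-(c*x)) * x)) (Ioi 0) := (gIntMul h₁ hc).const_mul _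
  have j12 : IntegrableOn (fun x : ℝ => (R * (Real.Gamma α₂ / c ^ α₂)
        + (α₂-1) * ((D2 - Real.Gamma α₂ * Real.log c) / c ^ α₂)
        - c * (α₂ * Real.Gamma α₂ / (c ^ α₂ * c)))
      * (x ^ (α₁-1) * Real.exp (-(c*x)))
      + ((α₁-1) * (Real.Gamma α₂ / c ^ α₂))
      * (x ^ (α₁-1) * Real.exp (-(c*x)) * Real.log x)) (Ioi 0) := j1.add j2
  rw [setIntegral_congr_fun measurableSet_Ioi hinner, integral_const_mul,
    integral_sub j12 j3, integral_add j1 j2,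
    integral_const_mul, integral_const_mul, integral_const_mul,
    gVal h₁ hc, gValLog h₁ hc, gValMul h₁ hc]
  -- final algebra
  have hca : (0:ℝ) < c ^ α₁ := Real.rpow_pos_of_pos hc _
  have hcb : (0:ℝ) < c ^ α₂ := Real.rpow_pos_of_pos hc _
  rw [hKdef, hRdef, Real.rpow_add hc, digamma, digamma, ← hD1, ← hD2,
    Real.log_div (mul_pos hΓa hΓb).ne' (pow_ne_zero 2 hc.ne'), Real.log_pow,
    Real.log_mul hΓa.ne' hΓb.ne']
  push_cast
  field_simp
  ring
end
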